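/- arXiv:1310.5088 — 6 statements merged into one kernel-verified Lean document; each statement's English description precedes it below -/
import Mathlib

section
/- A nonzero entire function f (restricted to the reals) that is completely monotone on (0,∞) (i.e. (-1)^n f^{(n)}(x) ≥ 0 for all x > 0 and all n ≥ 0) is strictly positive at every real number. -/
/-- A nonzero entire function (restricted to ℝ) that is completely monotone on (0,∞)
is strictly positive at every real number. -/
theorem stmt0 (f : ℝ → ℝ) (F : ℂ → ℂ)
    (hF : Differentiable ℂ F)
    (hFf : ∀ x : ℝ, F x = (f x : ℂ))
    (hne : f ≠ 0)
    (hcm : ∀ (n : ℕ), ∀ x : ℝ, 0 < x → 0 ≤ (-1 : ℝ) ^ n * iteratedDeriv n f x) :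
    ∀ x : ℝ, 0 < f x := by
  -- iterated derivatives of F are entire
  have hFd : ∀ n : ℕ, Differentiable ℂ (iteratedDeriv n F) := by
    intro n
    rw [iteratedDeriv_eq_iterate]
    exact ((hF.contDiff (n := (⊤ : ℕ∞))).iterate_deriv n).differentiable (by simp)
  -- iterated derivatives of F on ℝ are real and equal those of f
  have key : ∀ (n : ℕ) (x : ℝ), iteratedDeriv n F ↑x = ↑(iteratedDeriv n f x) := by
    intro n
    induction n with
    | zero => intro x; simpa using hFf x
    | succ n ih =>
      intro x
      rw [iteratedDeriv_succ, iteratedDeriv_succ]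
      set G := iteratedDeriv n F with hGdef
      have hG : Differentiable ℂ G := hFd n
      have h1 : HasDerivAt (fun t : ℝ => ((iteratedDeriv n f t : ℝ) : ℂ))
          (deriv G ↑x) x := by
        have h := (hG ↑x).hasDerivAt.comp_ofReal
        have : (fun t : ℝ => G ↑t) = fun t : ℝ => ((iteratedDeriv n f t : ℝ) : ℂ) := by
          funext t; exact ih t
        rwa [this] at h
      have h2 : HasDerivAt (iteratedDeriv n f) ((deriv G ↑x).re) x := by
        have h := (hG ↑x).hasDerivAt.real_of_complex
        have : (fun t : ℝ => (G ↑t).re) = iteratedDeriv n f := by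
          funext t; rw [ih t, Complex.ofReal_re]
        rwa [this] at h
      have h3 : HasDerivAt (fun t : ℝ => ((iteratedDeriv n f t : ℝ) : ℂ))
          (((deriv G ↑x).re : ℝ) : ℂ) x := by
        exact Complex.ofRealCLM.hasFDerivAt.comp_hasDerivAt x h2
      have h4 : deriv G ↑x = (((deriv G ↑x).re : ℝ) : ℂ) := h1.unique h3
      rw [h4, h2.deriv]
  -- f is differentiable everywhere
  have hfd : ∀ x : ℝ, HasDerivAt f ((deriv F ↑x).re) x := by
    intro x
    have h := (hF ↑x).hasDerivAt.real_of_complex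
    have : (fun t : ℝ => (F ↑t).re) = f := by
      funext t; rw [hFf t, Complex.ofReal_re]
    rwa [this] at h
  -- f is nonnegative on (0,∞)
  have hf0 : ∀ x : ℝ, 0 < x → 0 ≤ f x := by
    intro x hx
    have := hcm 0 x hx
    simpa [iteratedDeriv_zero] using this
  -- deriv f is nonpositive on (0,∞)
  have hf1 : ∀ x : ℝ, 0 < x → deriv f x ≤ 0 := by
    intro x hx
    have := hcm 1 x hx
    simp only [pow_one, iteratedDeriv_one, neg_one_mul, neg_nonneg] at this
    linarith
  -- f is strictly positive on (0,∞)
  have hpos : ∀ a : ℝ, 0 < a → 0 < f a := by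
    intro a ha
    rcases lt_or_eq_of_le (hf0 a ha) with h | h
    · exact h
    exfalso
    -- f is antitone on [a,∞), so f = 0 on [a,∞)
    have hanti : AntitoneOn f (Set.Ici a) := by
      apply antitoneOn_of_deriv_nonpos (convex_Ici a)
      · exact fun x _ => ((hfd x).differentiableAt).continuousAt.continuousWithinAt
      · intro x hx
        exact ((hfd x).differentiableAt).differentiableWithinAt
      · intro x hx
        rw [interior_Ici] at hx
        exact hf1 x (lt_trans ha hx)
    have hzero : ∀ x : ℝ, a ≤ x → f x = 0 := by
      intro x hx
      have h1 : f x ≤ f a := hanti (Set.self_mem_Ici) hx hx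
      have h2 : 0 ≤ f x := hf0 x (lt_of_lt_of_le ha hx)
      rw [← h] at h1
      linarith
    -- F vanishes frequently near ↑a, hence everywhere
    have hfreq : ∃ᶠ z in nhdsWithin (↑a : ℂ) {(↑a : ℂ)}ᶜ, F z = 0 := by
      have htend : Filter.Tendsto (fun n : ℕ => ((a + 1 / (n + 1) : ℝ) : ℂ))
          Filter.atTop (nhdsWithin (↑a : ℂ) {(↑a : ℂ)}ᶜ) := by
        apply tendsto_nhdsWithin_of_tendsto_nhds_of_eventually_within
        · have : Filter.Tendsto (fun n : ℕ => a + 1 / (n + 1 : ℝ)) Filter.atTop (nhds a) := by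
            have := tendsto_one_div_add_atTop_nhds_zero_nat (𝕜 := ℝ)
            have h' := this.const_add a
            simpa using h'
          exact (Complex.continuous_ofReal.tendsto a).comp this
        · filter_upwards with n
          simp only [Set.mem_compl_iff, Set.mem_singleton_iff, ne_eq]
          intro hc
          have : a + 1 / (n + 1 : ℝ) = a := by exact_mod_cast hc
          have hp : (0 : ℝ) < 1 / (n + 1 : ℝ) := by positivity
          linarith
      apply htend.frequently
      apply Filter.Frequently.of_forall
      intro n
      have hge : a ≤ a + 1 / (n + 1 : ℝ) := by
        have : (0 : ℝ) < 1 / (n + 1 : ℝ) := by positivity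
        linarith
      rw [hFf, hzero _ hge, Complex.ofReal_zero]
    have hFzero : Set.EqOn F 0 Set.univ := by
      apply AnalyticOnNhd.eqOn_zero_of_preconnected_of_frequently_eq_zero
        ((Complex.analyticOnNhd_univ_iff_differentiable.mpr hF)) isPreconnected_univ
        (Set.mem_univ _) hfreq
    apply hne
    funext x
    have := hFzero (Set.mem_univ (↑x : ℂ))
    rw [hFf x, Pi.zero_apply] at this
    exact_mod_cast this
  -- now the Taylor series argument for arbitrary x
  intro x
  set a : ℝ := max x 0 + 1 with ha_def
  have ha0 : 0 < a := by
    have : (0 : ℝ) ≤ max x 0 := le_max_right x 0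
    linarith
  have hax : x < a := by
    have : x ≤ max x 0 := le_max_left x 0
    linarith
  have hfa : 0 < f a := hpos a ha0
  -- Taylor series of F at a, evaluated at x
  have hs := Complex.hasSum_taylorSeries_of_entire hF (↑a) (↑x)
  set t : ℕ → ℝ := fun n => (n.factorial : ℝ)⁻¹ * (x - a) ^ n * iteratedDeriv n f a with ht_def
  have hterm : ∀ n : ℕ, (n.factorial : ℂ)⁻¹ • ((↑x : ℂ) - ↑a) ^ n • iteratedDeriv n F ↑a
      = ((t n : ℝ) : ℂ) := by
    intro n
    rw [key n a, ht_def]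
    simp only [smul_eq_mul]
    push_cast
    ring
  have hs' : HasSum (fun n : ℕ => ((t n : ℝ) : ℂ)) ((f x : ℝ) : ℂ) := by
    rw [← hFf x]
    have heq : (fun n : ℕ => (n.factorial : ℂ)⁻¹ • ((↑x : ℂ) - ↑a) ^ n • iteratedDeriv n F ↑a)
        = fun n : ℕ => ((t n : ℝ) : ℂ) := funext hterm
    rw [← heq]
    exact hs
  have hsr : HasSum t (f x) := Complex.hasSum_ofReal.mp hs'
  have htnonneg : ∀ n : ℕ, 0 ≤ t n := by
    intro n
    have hxa : (x - a) ^ n = (-1 : ℝ) ^ n * (a - x) ^ n := by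
      rw [← neg_sub a x, neg_pow]
    rw [ht_def]
    simp only
    rw [hxa]
    have h1 : (0 : ℝ) ≤ (n.factorial : ℝ)⁻¹ := by positivity
    have h2 : (0 : ℝ) ≤ (a - x) ^ n := pow_nonneg (by linarith) n
    have h3 := hcm n a ha0
    calc (0 : ℝ) ≤ (n.factorial : ℝ)⁻¹ * ((a - x) ^ n * ((-1 : ℝ) ^ n * iteratedDeriv n f a)) :=
          mul_nonneg h1 (mul_nonneg h2 h3)
      _ = (n.factorial : ℝ)⁻¹ * ((-1 : ℝ) ^ n * (a - x) ^ n) * iteratedDeriv n f a := by ring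
  have ht0 : 0 < t 0 := by
    rw [ht_def]
    simpa [iteratedDeriv_zero] using hfa
  calc (0 : ℝ) < ∑' n, t n := Summable.tsum_pos hsr.summable htnonneg 0 ht0
    _ = f x := hsr.tsum_eq
end

section
/- For real numbers a_0, …, a_m, the inequality ∑_{i=0}^m a_i φ(i) ≥ 0 holds for every convex function φ : ℝ → ℝ if and only if (i) ∑_{i=0}^m a_i = 0, (ii) ∑_{i=0}^m i·a_i = 0, and (iii) ∑_{j=0}^k ∑_{i=0}^j a_i ≥ 0 for every 0 ≤ k ≤ m. -/
open Finset

lemma secdiff (φ : ℝ → ℝ) (h : ConvexOn ℝ Set.univ φ) (k : ℕ) :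
    0 ≤ φ k - 2 * φ (k+1 : ℕ) + φ (k+2 : ℕ) := by
  have := h.2 (Set.mem_univ (k : ℝ)) (Set.mem_univ ((k : ℝ) + 2))
    (by norm_num : (0:ℝ) ≤ 1/2) (by norm_num : (0:ℝ) ≤ 1/2) (by norm_num)
  rw [smul_eq_mul, smul_eq_mul, smul_eq_mul, smul_eq_mul] at this
  have hmid : (1/2 : ℝ) * (k : ℝ) + (1/2 : ℝ) * ((k : ℝ) + 2) = ((k+1 : ℕ) : ℝ) := by
    push_cast; ring
  rw [hmid] at this
  have h2 : ((k+2:ℕ):ℝ) = (k:ℝ) + 2 := by push_cast; ring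
  rw [← h2] at this
  linarith

lemma Tk_eq (a : ℕ → ℝ) (k : ℕ) :
    ∑ j ∈ range (k+1), ∑ i ∈ range (j+1), a i
      = ∑ i ∈ range (k+1), ((k:ℝ) + 1 - i) * a i := by
  induction k with
  | zero => simp
  | succ k ih =>
    rw [sum_range_succ, ih]
    have : ∑ i ∈ range (k+1+1), (((k+1:ℕ):ℝ) + 1 - (i:ℝ)) * a i
        = ∑ i ∈ range (k+1+1), (((k:ℝ) + 1 - i) * a i + a i) := by
      apply sum_congr rfl; intro i _; push_cast; ring
    rw [this, sum_add_distrib, sum_range_succ (fun i => ((k:ℝ)+1-(i:ℝ)) * a i) (k+1)]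
    push_cast
    ring

lemma affine_convex (c d : ℝ) : ConvexOn ℝ Set.univ (fun x : ℝ => c + d * x) := by
  refine ⟨convex_univ, ?_⟩
  intro x _ y _ p q hp hq hpq
  simp only [smul_eq_mul]
  apply le_of_eq
  linear_combination (-c) * hpq

/-- Karlin–Novikoff: ∑ aᵢ φ(i) ≥ 0 for all convex φ iff the three conditions hold. -/
theorem stmt2 (m : ℕ) (a : ℕ → ℝ) :
    (∀ φ : ℝ → ℝ, ConvexOn ℝ Set.univ φ →
      0 ≤ ∑ i ∈ Finset.range (m + 1), a i * φ i) ↔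
    ((∑ i ∈ Finset.range (m + 1), a i = 0) ∧
     (∑ i ∈ Finset.range (m + 1), (i : ℝ) * a i = 0) ∧
     (∀ k ≤ m, 0 ≤ ∑ j ∈ Finset.range (k + 1), ∑ i ∈ Finset.range (j + 1), a i)) := by
  constructor
  · intro h
    have hc1 : 0 ≤ ∑ i ∈ range (m+1), a i := by
      simpa using h (fun _ => 1) (convexOn_const 1 convex_univ)
    have hc2 : 0 ≤ ∑ i ∈ range (m+1), -a i := by
      have := h (fun _ => -1) (convexOn_const (-1) convex_univ)
      simpa [mul_neg, mul_one] using this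
    rw [sum_neg_distrib] at hc2
    have h1 : ∑ i ∈ range (m+1), a i = 0 := by linarith
    have hid1 : 0 ≤ ∑ i ∈ range (m+1), a i * (i:ℝ) := by
      simpa using h (fun x => x) (convexOn_id convex_univ)
    have hid2 : 0 ≤ ∑ i ∈ range (m+1), -(a i * (i:ℝ)) := by
      have hconv : ConvexOn ℝ Set.univ (fun x : ℝ => 0 + (-1) * x) := affine_convex 0 (-1)
      have := h _ hconv
      simpa [mul_comm] using this
    rw [sum_neg_distrib] at hid2
    have h2 : ∑ i ∈ range (m+1), (i:ℝ) * a i = 0 := by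
      have : ∑ i ∈ range (m+1), (i:ℝ) * a i = ∑ i ∈ range (m+1), a i * (i:ℝ) :=
        sum_congr rfl fun i _ => mul_comm _ _
      rw [this]; linarith
    refine ⟨h1, h2, ?_⟩
    intro k hk
    set φ : ℝ → ℝ := (fun x => ((k:ℝ) + 1) + (-1) * x) ⊔ (fun _ => 0) with hφdef
    have hφconv : ConvexOn ℝ Set.univ φ :=
      (affine_convex ((k:ℝ)+1) (-1)).sup (convexOn_const 0 convex_univ)
    have hφ : ∀ x : ℝ, φ x = max ((k:ℝ) + 1 - x) 0 := by
      intro x; simp [hφdef, Pi.sup_apply, max_def]; ring_nf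
    have hmain := h φ hφconv
    have hsplit : ∑ i ∈ range (m+1), a i * φ i
        = ∑ i ∈ range (k+1), a i * φ i + ∑ i ∈ Ico (k+1) (m+1), a i * φ i := by
      rw [range_eq_Ico, range_eq_Ico]
      exact (Finset.sum_Ico_consecutive (fun i : ℕ => a i * φ i) (Nat.zero_le (k+1)) (Nat.succ_le_succ hk)).symm
    have hzero : ∑ i ∈ Ico (k+1) (m+1), a i * φ i = 0 := by
      apply sum_eq_zero
      intro i hi
      have hki : k + 1 ≤ i := (Finset.mem_Ico.mp hi).1
      have : φ i = 0 := by
        rw [hφ]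
        apply max_eq_right
        have : (k:ℝ) + 1 ≤ (i:ℝ) := by exact_mod_cast hki
        linarith
      rw [this, mul_zero]
    have hfirst : ∑ i ∈ range (k+1), a i * φ i
        = ∑ j ∈ range (k+1), ∑ i ∈ range (j+1), a i := by
      rw [Tk_eq]
      apply sum_congr rfl
      intro i hi
      have hik : i ≤ k := Nat.lt_succ_iff.mp (Finset.mem_range.mp hi)
      have : φ i = (k:ℝ) + 1 - i := by
        rw [hφ]
        apply max_eq_left
        have : (i:ℝ) ≤ (k:ℝ) := by exact_mod_cast hik
        linarith
      rw [this]; ring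
    rw [hsplit, hzero, hfirst] at hmain
    linarith
  · rintro ⟨h1, h2, h3⟩ φ hφ
    have hTm : ∑ j ∈ range (m+1), ∑ i ∈ range (j+1), a i = 0 := by
      rw [Tk_eq]
      have : ∑ i ∈ range (m+1), ((m:ℝ) + 1 - i) * a i
          = ((m:ℝ)+1) * (∑ i ∈ range (m+1), a i) - ∑ i ∈ range (m+1), (i:ℝ) * a i := by
        rw [mul_sum, ← sum_sub_distrib]
        apply sum_congr rfl; intro i _; ring
      rw [this, h1, h2]; ring
    match m, h1, h2, h3, hTm with
    | 0, h1, h2, h3, hTm =>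
      rw [sum_range_one] at h1 ⊢
      rw [h1, zero_mul]
    | (n+1 : ℕ), h1, h2, h3, hTm =>
      have hb1 := Finset.sum_range_by_parts (fun i : ℕ => φ i) a (n+2)
      simp only [smul_eq_mul, show n+2-1 = n+1 from rfl] at hb1
      rw [h1, mul_zero, zero_sub] at hb1
      have hb2 := Finset.sum_range_by_parts
        (fun i : ℕ => φ i - φ (i+1 : ℕ)) (fun j => ∑ i ∈ range (j+1), a i) (n+1)
      simp only [smul_eq_mul, Nat.add_sub_cancel] at hb2
      have hTn : ∑ j ∈ range (n+1), ∑ i ∈ range (j+1), a i = 0 := by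
        rw [sum_range_succ] at hTm
        rw [h1, add_zero] at hTm
        exact hTm
      rw [hTn, mul_zero, zero_sub] at hb2
      have hneg : ∑ i ∈ range (n+1), ((φ ((i+1 : ℕ)) - φ (i : ℕ)) * ∑ j ∈ range (i+1), a j)
          = - ∑ i ∈ range (n+1), ((φ (i : ℕ) - φ ((i+1 : ℕ))) * ∑ j ∈ range (i+1), a j) := by
        rw [← sum_neg_distrib]
        apply sum_congr rfl; intro i _; ring
      have hcomm : ∑ i ∈ range (n+2), a i * φ i = ∑ i ∈ range (n+2), φ i * a i :=
        sum_congr rfl fun i _ => mul_comm _ _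
      have hfinal : ∑ i ∈ range n,
          ((φ ((i+1 : ℕ)) - φ ((i+1+1 : ℕ)) - (φ (i : ℕ) - φ ((i+1 : ℕ))))
            * ∑ j ∈ range (i+1), ∑ l ∈ range (j+1), a l) ≤ 0 := by
        apply sum_nonpos
        intro i hi
        have hin : i < n := Finset.mem_range.mp hi
        have hT := h3 i (by omega)
        have hsd := secdiff φ hφ i
        have he : (i+1+1 : ℕ) = (i+2 : ℕ) := rfl
        rw [he]
        apply mul_nonpos_of_nonpos_of_nonneg _ hT
        linarith
      rw [hcomm, hb1, hneg]
      linarith [hb2, hfinal]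
end

section
/- Let a_0, …, a_d be real numbers, not all zero. Then ∑_{i=0}^d a_i φ(i) ≥ 0 holds for every convex sequence (φ(i)) if and only if the polynomial p(t) = ∑_{i=0}^d a_i t^i has a root of multiplicity at least 2 at t = 1 and all coefficients of the quotient polynomial p(t)/(t-1)^2 are nonnegative. -/
open Polynomial Finset

-- key identity
lemma key_id (q : ℝ[X]) (φ : ℕ → ℝ) (M : ℕ) (hM : q.natDegree < M) :
    ∑ i ∈ Finset.range (M + 2), ((X - 1 : ℝ[X]) ^ 2 * q).coeff i * φ i
      = ∑ k ∈ Finset.range M, q.coeff k * (φ (k + 2) - 2 * φ (k + 1) + φ k) := by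
  have hc : ∀ i, ((X - 1 : ℝ[X]) ^ 2 * q).coeff i
      = (X * (X * q)).coeff i - 2 * (X * q).coeff i + q.coeff i := by
    intro i
    have h : (X - 1 : ℝ[X]) ^ 2 * q = X * (X * q) - 2 * (X * q) + q := by ring
    rw [h]
    simp [coeff_add, coeff_sub]
  have hA : ∑ i ∈ Finset.range (M + 2), (X * (X * q)).coeff i * φ i
      = ∑ k ∈ Finset.range M, q.coeff k * φ (k + 2) := by
    rw [Finset.sum_range_succ' _ (M+1), Finset.sum_range_succ' _ M]
    simp [coeff_X_mul, mul_coeff_zero]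
  have hB : ∑ i ∈ Finset.range (M + 2), (X * q).coeff i * φ i
      = ∑ k ∈ Finset.range M, q.coeff k * φ (k + 1) := by
    rw [Finset.sum_range_succ' _ (M+1)]
    rw [Finset.sum_range_succ]
    have : q.coeff M = 0 := coeff_eq_zero_of_natDegree_lt hM
    simp [coeff_X_mul, mul_coeff_zero, this]
  have hC : ∑ i ∈ Finset.range (M + 2), q.coeff i * φ i
      = ∑ k ∈ Finset.range M, q.coeff k * φ k := by
    rw [Finset.sum_range_succ, Finset.sum_range_succ]
    have h1 : q.coeff M = 0 := coeff_eq_zero_of_natDegree_lt hM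
    have h2 : q.coeff (M+1) = 0 := coeff_eq_zero_of_natDegree_lt (by omega)
    simp [h1, h2]
  calc ∑ i ∈ Finset.range (M + 2), ((X - 1 : ℝ[X]) ^ 2 * q).coeff i * φ i
      = ∑ i ∈ Finset.range (M + 2), ((X * (X * q)).coeff i * φ i
          - 2 * ((X * q).coeff i * φ i) + q.coeff i * φ i) := by
        apply Finset.sum_congr rfl; intro i _; rw [hc]; ring
    _ = ∑ k ∈ Finset.range M, q.coeff k * (φ (k + 2) - 2 * φ (k + 1) + φ k) := by
        rw [Finset.sum_add_distrib, Finset.sum_sub_distrib, ← Finset.mul_sum, hA, hB, hC,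
          Finset.mul_sum, ← Finset.sum_sub_distrib, ← Finset.sum_add_distrib]
        apply Finset.sum_congr rfl; intro k _; ring

lemma coeff_p (d : ℕ) (a : ℕ → ℝ) (i : ℕ) :
    (∑ i ∈ Finset.range (d + 1), C (a i) * X ^ i).coeff i
      = if i ≤ d then a i else 0 := by
  rw [finset_sum_coeff]
  simp only [coeff_C_mul, coeff_X_pow]
  split
  · next h =>
    rw [Finset.sum_eq_single i]
    · simp
    · intro b _ hb; simp [hb, Ne.symm hb]
    · intro hi; exact absurd (Finset.mem_range.2 (by omega)) hi
  · next h =>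
    apply Finset.sum_eq_zero; intro b hb
    have : b ≠ i := by simp at hb; omega
    simp [this, Ne.symm this]

lemma sum_pad (d : ℕ) (a : ℕ → ℝ) (φ : ℕ → ℝ) (N : ℕ) (hN : d + 1 ≤ N) :
    ∑ i ∈ Finset.range N, (∑ i ∈ Finset.range (d + 1), C (a i) * X ^ i).coeff i * φ i
      = ∑ i ∈ Finset.range (d + 1), a i * φ i := by
  rw [← Finset.sum_subset (Finset.range_subset_range.2 hN)]
  · apply Finset.sum_congr rfl; intro i hi
    rw [coeff_p]; simp at hi; rw [if_pos (by omega)]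
  · intro i _ hi
    simp at hi
    rw [coeff_p, if_neg (by omega), zero_mul]

-- ramp sequence
noncomputable def ramp (k : ℕ) : ℕ → ℝ := fun i => ((i - (k + 1) : ℕ) : ℝ)

lemma ramp_delta (k i : ℕ) :
    ramp k (i + 2) - 2 * ramp k (i + 1) + ramp k i = if i = k then 1 else 0 := by
  unfold ramp
  rcases lt_trichotomy i k with h | h | h
  · rw [if_neg (by omega)]
    rw [Nat.sub_eq_zero_of_le (by omega), Nat.sub_eq_zero_of_le (by omega),
      Nat.sub_eq_zero_of_le (by omega)]
    norm_num
  · subst h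
    rw [if_pos rfl]
    rw [show i + 2 - (i+1) = 1 by omega, Nat.sub_eq_zero_of_le (by omega),
      Nat.sub_eq_zero_of_le (by omega)]
    norm_num
  · rw [if_neg (by omega)]
    rw [show i + 2 - (k+1) = (i - (k+1)) + 2 by omega,
      show i + 1 - (k+1) = (i - (k+1)) + 1 by omega]
    push_cast
    ring

lemma ramp_convex (k i : ℕ) : 0 ≤ ramp k (i + 2) - 2 * ramp k (i + 1) + ramp k i := by
  rw [ramp_delta]; split <;> norm_num

open Polynomial in
/-- ∑ aᵢ φ(i) ≥ 0 for every convex sequence φ iff ∑ aᵢ tⁱ has a double root at 1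
and the quotient by (t-1)² has nonnegative coefficients. -/
theorem stmt3 (d : ℕ) (a : ℕ → ℝ) (hne : ∃ i ≤ d, a i ≠ 0) :
    (∀ φ : ℕ → ℝ, (∀ i : ℕ, 0 ≤ φ (i + 2) - 2 * φ (i + 1) + φ i) →
      0 ≤ ∑ i ∈ Finset.range (d + 1), a i * φ i) ↔
    (((X - 1 : ℝ[X]) ^ 2 ∣ ∑ i ∈ Finset.range (d + 1), C (a i) * X ^ i) ∧
     ∀ k : ℕ, 0 ≤ ((∑ i ∈ Finset.range (d + 1), C (a i) * X ^ i) /ₘ (X - 1) ^ 2).coeff k) := by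
  set p : ℝ[X] := ∑ i ∈ Finset.range (d + 1), C (a i) * X ^ i with hp
  have hmonic : ((X : ℝ[X]) - 1) ^ 2 |>.Monic := by
    rw [show ((X : ℝ[X]) - 1) = X - C 1 by rw [C_1]]
    exact (monic_X_sub_C 1).pow 2
  constructor
  · intro h
    -- eval at 1 is 0
    have hs : ∑ i ∈ Finset.range (d + 1), a i = 0 := by
      have h1 := h (fun _ => 1) (by intro i; norm_num)
      have h2 := h (fun _ => -1) (by intro i; norm_num)
      simp only [mul_one, mul_neg] at h1 h2
      rw [Finset.sum_neg_distrib] at h2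
      linarith
    have hl : ∑ i ∈ Finset.range (d + 1), a i * i = 0 := by
      have h1 := h (fun i => (i : ℝ)) (by intro i; push_cast; ring_nf; norm_num)
      have h2 := h (fun i => -(i : ℝ)) (by intro i; push_cast; ring_nf; norm_num)
      simp only [mul_neg] at h2
      rw [Finset.sum_neg_distrib] at h2
      linarith
    have heval : p.eval 1 = 0 := by
      rw [hp, eval_finset_sum]; simpa using hs
    have hderiv : (derivative p).eval 1 = 0 := by
      rw [hp, derivative_sum]
      rw [eval_finset_sum]
      have : ∀ i ∈ Finset.range (d+1), (derivative (C (a i) * X ^ i)).eval 1 = a i * i := by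
        intro i _; rw [derivative_C_mul_X_pow]; simp
      rw [Finset.sum_congr rfl this]
      exact hl
    -- double root
    obtain ⟨q1, hq1⟩ : ((X : ℝ[X]) - C 1) ∣ p := dvd_iff_isRoot.2 heval
    have hq1eval : q1.eval 1 = 0 := by
      have := hderiv
      rw [hq1, derivative_mul] at this
      simpa using this
    obtain ⟨q2, hq2⟩ : ((X : ℝ[X]) - C 1) ∣ q1 := dvd_iff_isRoot.2 hq1eval
    have hdvd : ((X : ℝ[X]) - 1) ^ 2 ∣ p := by
      refine ⟨q2, ?_⟩
      rw [hq1, hq2, C_1]; ring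
    refine ⟨hdvd, ?_⟩
    set q : ℝ[X] := p /ₘ (X - 1) ^ 2 with hq
    have hmod : p = (X - 1) ^ 2 * q := by
      have h0 : p %ₘ ((X - 1) ^ 2) = 0 :=
        ((modByMonic_eq_zero_iff_dvd hmonic)).2 hdvd
      have := modByMonic_add_div p ((X - 1 : ℝ[X]) ^ 2)
      rw [h0, zero_add] at this
      exact this.symm
    intro k
    set M := q.natDegree + d + k + 1 with hM
    have hid := key_id q (ramp k) M (by omega)
    have hpad := sum_pad d a (ramp k) (M + 2) (by omega)
    rw [← hmod] at hid
    rw [← hp] at hpad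
    have hval : ∑ j ∈ Finset.range M, q.coeff j * (ramp k (j + 2) - 2 * ramp k (j + 1) + ramp k j)
        = q.coeff k := by
      have : ∀ j ∈ Finset.range M, q.coeff j * (ramp k (j + 2) - 2 * ramp k (j + 1) + ramp k j)
          = if j = k then q.coeff j else 0 := by
        intro j _; rw [ramp_delta]; split <;> simp
      rw [Finset.sum_congr rfl this, Finset.sum_ite_eq' (Finset.range M) k q.coeff,
        if_pos (Finset.mem_range.2 (by omega))]
    have hpos := h (ramp k) (ramp_convex k)
    rw [← hpad, hid, hval] at hpos
    exact hpos
  · rintro ⟨hdvd, hcoeff⟩ φ hφ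
    set q : ℝ[X] := p /ₘ (X - 1) ^ 2 with hq
    have hmod : p = (X - 1) ^ 2 * q := by
      have h0 : p %ₘ ((X - 1) ^ 2) = 0 :=
        ((modByMonic_eq_zero_iff_dvd hmonic)).2 hdvd
      have := modByMonic_add_div p ((X - 1 : ℝ[X]) ^ 2)
      rw [h0, zero_add] at this
      exact this.symm
    set M := q.natDegree + d + 1 with hM
    have hid := key_id q φ M (by omega)
    have hpad := sum_pad d a φ (M + 2) (by omega)
    rw [← hmod] at hid
    rw [← hp] at hpad
    rw [← hpad, hid]
    exact Finset.sum_nonneg fun k _ => mul_nonneg (hcoeff k) (hφ k)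
end

section
/- Let μ be a finite signed measure on [a,b], let μ₁(x) = μ([a,x]) and μ₂(x) = ∫_a^x μ₁(t) dt. Then ∫_a^b φ dμ ≥ 0 for every convex function φ on [a,b] if and only if (i) μ([a,b]) = 0, (ii) ∫_a^b x dμ = 0, and (iii) μ₂(x) ≥ 0 for all x ∈ [a,b]. -/
open MeasureTheory Set
open scoped ENNReal

lemma kn_restrict (a b : ℝ) (μ : Measure ℝ) (h : μ (Set.Icc a b)ᶜ = 0) :
    μ.restrict (Set.Icc a b) = μ :=
  Measure.restrict_eq_self_of_ae_mem (ae_iff.2 h)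

lemma kn_integrable (a b : ℝ) (μ : Measure ℝ) [IsFiniteMeasure μ] (h : μ (Set.Icc a b)ᶜ = 0)
    {g : ℝ → ℝ} (hg : Continuous g) : Integrable g μ := by
  rw [← kn_restrict a b μ h]
  exact (hg.continuousOn).integrableOn_compact isCompact_Icc

lemma kn_univ (a b : ℝ) (μ : Measure ℝ) (h : μ (Set.Icc a b)ᶜ = 0) :
    μ Set.univ = μ (Set.Icc a b) := by
  rw [← measure_add_measure_compl measurableSet_Icc, h, add_zero]

lemma kn_affine_convex (a b c d : ℝ) : ConvexOn ℝ (Set.Icc a b) (fun y => c * y + d) := by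
  refine ⟨convex_Icc a b, fun x _ y _ p q hp hq hpq => le_of_eq ?_⟩
  simp only [smul_eq_mul]
  linear_combination (-d) * hpq

lemma kn_hinge_convex (a b c d : ℝ) :
    ConvexOn ℝ (Set.Icc a b) (fun y => max (c * y + d) 0) := by
  have := (kn_affine_convex a b c d).sup (convexOn_const 0 (convex_Icc a b))
  exact this

lemma kn_mono (μ : Measure ℝ) [IsFiniteMeasure μ] (a : ℝ) :
    Monotone (fun s => (μ (Set.Icc a s)).toReal) := fun u v huv =>
  ENNReal.toReal_mono (measure_ne_top μ _) (measure_mono (Set.Icc_subset_Icc_right huv))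

lemma pl_eval (ψ : ℝ → ℝ) (a Δ : ℝ) (s : ℕ → ℝ)
    (hs : ∀ i : ℕ, ψ (a + (i + 1) * Δ) = ψ (a + i * Δ) + s i * Δ) (j : ℕ) (x : ℝ) :
    ψ a + s 0 * (x - a) + ∑ i ∈ Finset.Ico 1 (j + 1), (s i - s (i - 1)) * (x - (a + i * Δ))
      = ψ (a + j * Δ) + s j * (x - (a + j * Δ)) := by
  induction j with
  | zero => simp
  | succ j ih =>
      rw [Finset.sum_Ico_succ_top (by omega), ← add_assoc, ih]
      have h1 := hs j
      have h2 : (j + 1) - 1 = j := by omega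
      rw [h2]
      push_cast
      push_cast at h1
      linear_combination -h1

lemma pl_eval' (ψ : ℝ → ℝ) (a Δ : ℝ) (hΔ : 0 ≤ Δ) (s : ℕ → ℝ)
    (hs : ∀ i : ℕ, ψ (a + (i + 1) * Δ) = ψ (a + i * Δ) + s i * Δ) (n j : ℕ) (hj : j < n)
    (x : ℝ) (hx1 : a + j * Δ ≤ x) (hx2 : x ≤ a + (j + 1) * Δ) :
    ψ a + s 0 * (x - a) + ∑ i ∈ Finset.Ico 1 n, (s i - s (i - 1)) * max (x - (a + i * Δ)) 0
      = ψ (a + j * Δ) + s j * (x - (a + j * Δ)) := by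
  rw [← Finset.sum_Ico_consecutive _ (by omega : 1 ≤ j + 1) (by omega : j + 1 ≤ n)]
  have hz : ∑ i ∈ Finset.Ico (j + 1) n, (s i - s (i - 1)) * max (x - (a + i * Δ)) 0 = 0 := by
    apply Finset.sum_eq_zero
    intro i hi
    have hji : (j : ℝ) + 1 ≤ (i : ℝ) := by exact_mod_cast (Finset.mem_Ico.1 hi).1
    have : x ≤ a + i * Δ := by nlinarith
    rw [max_eq_right (by linarith), mul_zero]
  have hfst : ∀ i ∈ Finset.Ico 1 (j + 1),
      (s i - s (i - 1)) * max (x - (a + i * Δ)) 0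
        = (s i - s (i - 1)) * (x - (a + i * Δ)) := by
    intro i hi
    have hij : (i : ℝ) ≤ (j : ℝ) := by
      have := (Finset.mem_Ico.1 hi).2
      exact_mod_cast by omega
    have : a + i * Δ ≤ x := by nlinarith
    rw [max_eq_left (by linarith)]
  rw [hz, add_zero, Finset.sum_congr rfl hfst]
  exact pl_eval ψ a Δ s hs j x


lemma hinge_int (a b t : ℝ) (hab : a ≤ b) (hat : a ≤ t) (htb : t ≤ b)
    (μ : Measure ℝ) [IsFiniteMeasure μ] (h : μ (Set.Icc a b)ᶜ = 0) :
    ∫ y, max (t - y) 0 ∂μ = ∫ s in a..t, (μ (Set.Icc a s)).toReal := by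
  -- the measurable "kernel" set
  set K : Set (ℝ × ℝ) := {p | p.1 < p.2 ∧ p.2 ∈ Set.Ioc a t} with hK
  have hKm : MeasurableSet K := by
    apply MeasurableSet.inter
    · exact measurableSet_lt measurable_fst measurable_snd
    · exact measurable_snd measurableSet_Ioc
  have hmono : Monotone (fun s => (μ (Set.Icc a s)).toReal) := by
    intro u v huv
    exact ENNReal.toReal_mono (measure_ne_top μ _) (measure_mono (Set.Icc_subset_Icc_right huv))
  -- LHS as lintegral
  have hL : ∫ y, max (t - y) 0 ∂μ
      = (∫⁻ y, ENNReal.ofReal (max (t - y) 0) ∂μ).toReal := by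
    rw [integral_eq_lintegral_of_nonneg_ae]
    · exact Filter.Eventually.of_forall fun y => le_max_right _ _
    · exact (Continuous.max (by continuity) continuous_const).aestronglyMeasurable
  -- pointwise: ofReal (max (t-y) 0) = volume (Ioc y t)
  have hpt : ∀ y : ℝ, ENNReal.ofReal (max (t - y) 0) = volume (Set.Ioc y t) := by
    intro y
    rw [Real.volume_Ioc]
    rcases le_total y t with hyt | hyt
    · rw [max_eq_left (by linarith)]
    · rw [max_eq_right (by linarith), ENNReal.ofReal_of_nonpos (by linarith : t - y ≤ 0)]
      simp
  -- a.e. y, volume (Ioc y t) = ∫⁻ s, K.indicator 1 (y, s)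
  have hae : ∀ᵐ y ∂μ, y ∈ Set.Icc a b := ae_iff.2 h
  have hfib : ∀ y : ℝ, a ≤ y → volume (Set.Ioc y t) = ∫⁻ s, K.indicator 1 (y, s) := by
    intro y hay
    have : (fun s => K.indicator (1 : ℝ × ℝ → ℝ≥0∞) (y, s))
        = (Set.Ioc y t).indicator 1 := by
      funext s
      by_cases hs : s ∈ Set.Ioc y t
      · have hmem : ((y, s) : ℝ × ℝ) ∈ K := ⟨hs.1, lt_of_le_of_lt hay hs.1, hs.2⟩
        simp only [Set.indicator_of_mem hs, Set.indicator_of_mem hmem, Pi.one_apply]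
      · have hmem : ((y, s) : ℝ × ℝ) ∉ K := fun hc => hs ⟨hc.1, hc.2.2⟩
        simp only [Set.indicator_of_notMem hs, Set.indicator_of_notMem hmem]
    rw [this, lintegral_indicator_one measurableSet_Ioc]
  have key : ∫⁻ y, ENNReal.ofReal (max (t - y) 0) ∂μ
      = ∫⁻ s in Set.Ioc a t, μ (Set.Iio s) := by
    calc ∫⁻ y, ENNReal.ofReal (max (t - y) 0) ∂μ
        = ∫⁻ y, ∫⁻ s, K.indicator 1 (y, s) ∂volume ∂μ := by
          refine lintegral_congr_ae ?_
          filter_upwards [hae] with y hy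
          rw [hpt y, hfib y hy.1]
      _ = ∫⁻ s, ∫⁻ y, K.indicator 1 (y, s) ∂μ ∂volume := by
          apply lintegral_lintegral_swap
          exact (measurable_one.indicator hKm).aemeasurable
      _ = ∫⁻ s, (Set.Ioc a t).indicator (fun s => μ (Set.Iio s)) s ∂volume := by
          refine lintegral_congr fun s => ?_
          by_cases hs : s ∈ Set.Ioc a t
          · rw [Set.indicator_of_mem hs]
            have : (fun y => K.indicator (1 : ℝ × ℝ → ℝ≥0∞) (y, s))
                = (Set.Iio s).indicator 1 := by
              funext y
              by_cases hy : y ∈ Set.Iio s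
              · have hmem : ((y, s) : ℝ × ℝ) ∈ K := ⟨hy, hs⟩
                simp only [Set.indicator_of_mem hy, Set.indicator_of_mem hmem, Pi.one_apply]
              · have hmem : ((y, s) : ℝ × ℝ) ∉ K := fun hc => hy hc.1
                simp only [Set.indicator_of_notMem hy, Set.indicator_of_notMem hmem]
            rw [this, lintegral_indicator_one measurableSet_Iio]
          · rw [Set.indicator_of_notMem hs]
            have : (fun y => K.indicator (1 : ℝ × ℝ → ℝ≥0∞) (y, s)) = 0 := by
              funext y
              exact Set.indicator_of_notMem (fun hc => hs hc.2) _
            rw [this]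
            exact lintegral_zero
      _ = ∫⁻ s in Set.Ioc a t, μ (Set.Iio s) := by
          rw [← lintegral_indicator measurableSet_Ioc]
  -- a.e. s in Ioc a t, μ (Iio s) = μ (Icc a s)
  have hcnt : Set.Countable {x : ℝ | μ {x} ≠ 0} := by
    have := Measure.countable_meas_pos_of_disjoint_iUnion (μ := μ) (As := fun x : ℝ => {x})
      (fun i => measurableSet_singleton i) (fun i j hij => by simpa using hij)
    convert this using 1
    ext x; simp [pos_iff_ne_zero]
  have hae2 : ∀ᵐ s ∂(volume.restrict (Set.Ioc a t)), μ (Set.Iio s) = μ (Set.Icc a s) := by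
    have h1 : ∀ᵐ s ∂(volume.restrict (Set.Ioc a t)), μ {s} = 0 := by
      refine ae_restrict_of_ae ?_
      have : volume {x : ℝ | μ {x} ≠ 0} = 0 := hcnt.measure_zero _
      filter_upwards [ae_iff.2 this] with s hs
      simpa using hs
    filter_upwards [h1, ae_restrict_mem measurableSet_Ioc] with s hs1 hs2
    have h3 : μ (Set.Iio s) = μ (Set.Ico a s) := by
      rw [← measure_inter_conull' (t := Set.Icc a b)
        (measure_mono_null (Set.diff_subset_compl _ _) h)]
      congr 1
      ext y
      simp only [Set.mem_inter_iff, Set.mem_Iio, Set.mem_Icc, Set.mem_Ico]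
      constructor
      · rintro ⟨h1, h2, h3⟩; exact ⟨h2, h1⟩
      · rintro ⟨h1, h2⟩; exact ⟨h2, h1, le_trans (le_of_lt h2) (le_trans hs2.2 htb)⟩
    have h4 : μ (Set.Icc a s) = μ (Set.Ico a s) + μ {s} := by
      rw [← Set.Ico_union_right (le_of_lt hs2.1)]
      rw [measure_union (by simp) (measurableSet_singleton s)]
    rw [h3, h4, hs1, add_zero]
  have key2 : ∫⁻ s in Set.Ioc a t, μ (Set.Iio s)
      = ∫⁻ s in Set.Ioc a t, μ (Set.Icc a s) := lintegral_congr_ae hae2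
  -- RHS as lintegral
  have hR : ∫ s in a..t, (μ (Set.Icc a s)).toReal
      = (∫⁻ s in Set.Ioc a t, μ (Set.Icc a s)).toReal := by
    rw [intervalIntegral.integral_of_le hat, integral_eq_lintegral_of_nonneg_ae]
    · congr 1
      refine lintegral_congr fun s => ?_
      rw [ENNReal.ofReal_toReal (measure_ne_top μ _)]
    · exact Filter.Eventually.of_forall fun s => ENNReal.toReal_nonneg
    · exact (hmono.measurable.aestronglyMeasurable).restrict
  rw [hL, key, key2, hR]

set_option maxHeartbeats 2000000 in
open MeasureTheory in
/-- Karlin–Novikoff, continuous version: for a finite signed measure (written as μp - μm)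
supported on [a,b], ∫ φ dμ ≥ 0 for all convex φ iff the three moment/positivity conditions hold. -/
theorem stmt4 (a b : ℝ) (hab : a ≤ b)
    (μp μm : Measure ℝ) [IsFiniteMeasure μp] [IsFiniteMeasure μm]
    (hp : μp (Set.Icc a b)ᶜ = 0) (hm : μm (Set.Icc a b)ᶜ = 0) :
    (∀ φ : ℝ → ℝ, Continuous φ → ConvexOn ℝ (Set.Icc a b) φ →
        0 ≤ (∫ x, φ x ∂μp) - ∫ x, φ x ∂μm) ↔
    ((μp (Set.Icc a b)).toReal = (μm (Set.Icc a b)).toReal ∧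
     (∫ x, x ∂μp) - (∫ x, x ∂μm) = 0 ∧
     ∀ x ∈ Set.Icc a b,
       0 ≤ ∫ t in a..x, ((μp (Set.Icc a t)).toReal - (μm (Set.Icc a t)).toReal)) := by
  constructor
  · intro H
    refine ⟨?_, ?_, ?_⟩
    · have h1 := H (fun _ => 1) continuous_const (convexOn_const 1 (convex_Icc a b))
      have h2 := H (fun _ => -1) continuous_const (convexOn_const (-1) (convex_Icc a b))
      simp only [integral_const, smul_eq_mul, mul_one, mul_neg, measureReal_def] at h1 h2
      rw [kn_univ a b μp hp, kn_univ a b μm hm] at h1 h2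
      linarith
    · have hcid : ConvexOn ℝ (Set.Icc a b) (fun x : ℝ => x) := by
        have := kn_affine_convex a b 1 0
        simpa using this
      have hcnid : ConvexOn ℝ (Set.Icc a b) (fun x : ℝ => -x) := by
        have := kn_affine_convex a b (-1) 0
        simpa using this
      have h1 := H (fun x => x) continuous_id hcid
      have h2 := H (fun x => -x) continuous_neg hcnid
      rw [integral_neg, integral_neg] at h2
      linarith
    · intro x hx
      have hc : Continuous (fun y : ℝ => max (x - y) 0) :=
        (continuous_const.sub continuous_id).max continuous_const
      have hconv : ConvexOn ℝ (Set.Icc a b) (fun y : ℝ => max (x - y) 0) := by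
        have := kn_hinge_convex a b (-1) x
        convert this using 2 with y
        ring_nf
      have hh := H _ hc hconv
      rw [hinge_int a b x hab hx.1 hx.2 μp hp, hinge_int a b x hab hx.1 hx.2 μm hm] at hh
      rwa [intervalIntegral.integral_sub ((kn_mono μp a).intervalIntegrable)
        ((kn_mono μm a).intervalIntegrable)]
  · rintro ⟨h1, h2, h3⟩ φ hφc hφconv
    have hMp : μp Set.univ = μp (Set.Icc a b) := kn_univ a b μp hp
    have hMm : μm Set.univ = μm (Set.Icc a b) := kn_univ a b μm hm
    have hMM : (μp Set.univ).toReal = (μm Set.univ).toReal := by rw [hMp, hMm]; exact h1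
    have hip : ∀ {g : ℝ → ℝ}, Continuous g → Integrable g μp :=
      fun hg => kn_integrable a b μp hp hg
    have him : ∀ {g : ℝ → ℝ}, Continuous g → Integrable g μm :=
      fun hg => kn_integrable a b μm hm hg
    have hidc : Continuous (fun y : ℝ => y) := continuous_id
    -- affine integrals vanish
    have haff : ∀ c d : ℝ, (∫ y, (c * y + d) ∂μp) - (∫ y, (c * y + d) ∂μm) = 0 := by
      intro c d
      have ep : ∫ y, (c * y + d) ∂μp = c * (∫ y, y ∂μp) + (μp Set.univ).toReal * d := by
        rw [integral_add ((hip hidc).const_mul c) (integrable_const d),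
          integral_const_mul, integral_const, smul_eq_mul, measureReal_def]
      have em : ∫ y, (c * y + d) ∂μm = c * (∫ y, y ∂μm) + (μm Set.univ).toReal * d := by
        rw [integral_add ((him hidc).const_mul c) (integrable_const d),
          integral_const_mul, integral_const, smul_eq_mul, measureReal_def]
      rw [ep, em, hMM]
      rw [sub_eq_zero] at h2
      rw [h2]
      ring
    -- hinge integrals (in the increasing orientation) are nonnegative
    have hhinge : ∀ c : ℝ, c ∈ Set.Icc a b →
        0 ≤ (∫ y, max (y - c) 0 ∂μp) - ∫ y, max (y - c) 0 ∂μm := by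
      intro c hc
      have hpm : (fun y : ℝ => max (y - c) 0) = fun y => max (c - y) 0 + (y - c) := by
        funext y
        rcases le_total y c with h | h
        · rw [max_eq_right (by linarith), max_eq_left (by linarith)]; ring
        · rw [max_eq_left (by linarith), max_eq_right (by linarith)]; ring
      have hcont1 : Continuous (fun y : ℝ => max (c - y) 0) :=
        (continuous_const.sub continuous_id).max continuous_const
      have hcont2 : Continuous (fun y : ℝ => y - c) := continuous_id.sub continuous_const
      have ep : ∫ y, max (y - c) 0 ∂μp
          = (∫ y, max (c - y) 0 ∂μp) + ((∫ y, y ∂μp) - (μp Set.univ).toReal * c) := by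
        rw [hpm, integral_add (hip hcont1) (hip hcont2),
          integral_sub (hip hidc) (integrable_const c), integral_const, smul_eq_mul, measureReal_def]
      have em : ∫ y, max (y - c) 0 ∂μm
          = (∫ y, max (c - y) 0 ∂μm) + ((∫ y, y ∂μm) - (μm Set.univ).toReal * c) := by
        rw [hpm, integral_add (him hcont1) (him hcont2),
          integral_sub (him hidc) (integrable_const c), integral_const, smul_eq_mul, measureReal_def]
      have hID := h3 c hc
      rw [intervalIntegral.integral_sub (kn_mono μp a).intervalIntegrable
        (kn_mono μm a).intervalIntegrable] at hID
      rw [← hinge_int a b c hab hc.1 hc.2 μp hp, ← hinge_int a b c hab hc.1 hc.2 μm hm]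
        at hID
      rw [ep, em, hMM]
      linarith
    rcases eq_or_lt_of_le hab with heq | hlt
    · -- degenerate case a = b
      subst heq
      have eqp : ∫ y, φ y ∂μp = (μp Set.univ).toReal • φ a := by
        rw [← measureReal_def, ← integral_const]
        apply integral_congr_ae
        filter_upwards [ae_iff.2 hp] with y hy
        have : y = a := le_antisymm hy.2 hy.1
        rw [this]
      have eqm : ∫ y, φ y ∂μm = (μm Set.univ).toReal • φ a := by
        rw [← measureReal_def, ← integral_const]
        apply integral_congr_ae
        filter_upwards [ae_iff.2 hm] with y hy
        have : y = a := le_antisymm hy.2 hy.1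
        rw [this]
      rw [eqp, eqm, hMM]
      simp
    -- main case a < b
    by_contra hcon
    push_neg at hcon
    set I := (∫ x, φ x ∂μp) - ∫ x, φ x ∂μm with hIdef
    have hIneg : I < 0 := hcon
    set Mp := (μp Set.univ).toReal with hMpdef
    have hMp0 : 0 ≤ Mp := ENNReal.toReal_nonneg
    set ε := -I / (2 * (Mp + 1)) with hεdef
    have hε : 0 < ε := by
      apply div_pos (by linarith) (by linarith)
    -- uniform continuity
    obtain ⟨δ, hδ0, hδ⟩ := Metric.uniformContinuousOn_iff.1
      ((isCompact_Icc (a := a) (b := b)).uniformContinuousOn_of_continuous hφc.continuousOn) ε hε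
    obtain ⟨n, hn⟩ := exists_nat_gt ((b - a) / δ)
    have hba : 0 < (b - a) / δ := div_pos (by linarith) hδ0
    have hn0 : 0 < n := by exact_mod_cast Nat.cast_pos.1 (lt_trans hba hn)
    have hn0' : (0 : ℝ) < n := by exact_mod_cast hn0
    set Δ := (b - a) / n with hΔdef
    have hΔ0 : 0 < Δ := div_pos (by linarith) hn0'
    have hΔδ : Δ < δ := by
      rw [hΔdef, div_lt_iff₀ hn0']
      have := (div_lt_iff₀ hδ0).1 hn
      linarith
    set t : ℕ → ℝ := fun i => a + i * Δ with htdef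
    have htmono : ∀ i i' : ℕ, i ≤ i' → t i ≤ t i' := by
      intro i i' h
      have hii : (i : ℝ) ≤ i' := Nat.cast_le.2 h
      simp only [htdef]
      nlinarith
    have htn : t n = b := by
      simp only [htdef, hΔdef]
      field_simp
      ring
    have htd : ∀ m : ℕ, t (m + 1) - t m = Δ := by
      intro m
      simp only [htdef]
      push_cast
      ring
    have htmem : ∀ i : ℕ, i ≤ n → t i ∈ Set.Icc a b := by
      intro i hi
      constructor
      · have : (0 : ℝ) ≤ i := Nat.cast_nonneg i
        simp only [htdef]
        nlinarith
      · rw [← htn]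
        exact htmono i n hi
    set s : ℕ → ℝ := fun i => (φ (t (i + 1)) - φ (t i)) / Δ with hsdef
    have hts : ∀ i : ℕ, φ (t (i + 1)) = φ (t i) + s i * Δ := by
      intro i
      simp only [hsdef]
      field_simp
      ring
    have hts' : ∀ i : ℕ, φ (a + ((i : ℝ) + 1) * Δ) = φ (a + (i : ℝ) * Δ) + s i * Δ := by
      intro i
      have h := hts i
      simp only [htdef] at h
      push_cast at h
      exact h
    -- slopes are monotone
    have hsm : ∀ i : ℕ, 1 ≤ i → i + 1 ≤ n → s (i - 1) ≤ s i := by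
      intro i hi1 hin
      obtain ⟨k, rfl⟩ : ∃ k, i = k + 1 := ⟨i - 1, by omega⟩
      have hk1 : k + 1 - 1 = k := by omega
      rw [hk1]
      have hlt1 : t k < t (k + 1) := by
        have := htd k; linarith
      have hlt2 : t (k + 1) < t (k + 2) := by
        have := htd (k + 1); linarith
      have hslope := hφconv.slope_mono_adjacent (htmem k (by omega)) (htmem (k + 2) (by omega))
        hlt1 hlt2
      have e1 : t (k + 1) - t k = Δ := htd k
      have e2 : t (k + 2) - t (k + 1) = Δ := htd (k + 1)
      rw [e1, e2] at hslope
      simpa [hsdef] using hslope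
    -- locating a point in the grid
    have hlocate : ∀ x ∈ Set.Icc a b, ∃ j : ℕ, j + 1 ≤ n ∧ t j ≤ x ∧ x ≤ t (j + 1) := by
      intro x hx
      set j0 := ⌊(x - a) / Δ⌋₊ with hj0
      have hr0 : 0 ≤ (x - a) / Δ := div_nonneg (by linarith [hx.1]) hΔ0.le
      have hfl : (j0 : ℝ) ≤ (x - a) / Δ := Nat.floor_le hr0
      have hfl2 : (x - a) / Δ < (j0 : ℝ) + 1 := Nat.lt_floor_add_one _
      have hflx : (j0 : ℝ) * Δ ≤ x - a := (le_div_iff₀ hΔ0).1 hfl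
      rcases le_or_gt (j0 + 1) n with hcase | hcase
      · refine ⟨j0, hcase, ?_, ?_⟩
        · simp only [htdef]; linarith
        · simp only [htdef]
          push_cast
          have : x - a < ((j0 : ℝ) + 1) * Δ := (div_lt_iff₀ hΔ0).1 hfl2
          linarith
      · refine ⟨n - 1, by omega, ?_, ?_⟩
        · have hnj : n ≤ j0 := by omega
          have hnj' : (n : ℝ) ≤ (j0 : ℝ) := Nat.cast_le.2 hnj
          have hcast : ((n - 1 : ℕ) : ℝ) = (n : ℝ) - 1 := by
            push_cast [Nat.cast_sub hn0]
            ring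
          simp only [htdef, hcast]
          nlinarith
        · have hone : n - 1 + 1 = n := by omega
          rw [hone, htn]
          exact hx.2
    -- the piecewise linear approximant
    set f : ℝ → ℝ := fun x =>
      φ a + s 0 * (x - a) + ∑ i ∈ Finset.Ico 1 n, (s i - s (i - 1)) * max (x - t i) 0 with hfdef
    have hchord : ∀ j : ℕ, j + 1 ≤ n → ∀ x : ℝ, t j ≤ x → x ≤ t (j + 1) →
        f x = φ (t j) + s j * (x - t j) := by
      intro j hj x hx1 hx2
      have hx1' : a + (j : ℝ) * Δ ≤ x := by simpa [htdef] using hx1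
      have hx2' : x ≤ a + ((j : ℝ) + 1) * Δ := by
        have := hx2
        simp only [htdef] at this
        push_cast at this
        exact this
      have H := pl_eval' φ a Δ hΔ0.le s hts' n j (by omega) x hx1' hx2'
      simp only [hfdef, htdef]
      exact H
    -- two-sided bound for the approximant
    have hbound : ∀ x ∈ Set.Icc a b, φ x ≤ f x ∧ f x ≤ φ x + ε := by
      intro x hx
      obtain ⟨j, hjn, hx1, hx2⟩ := hlocate x hx
      have hfx := hchord j hjn x hx1 hx2
      have htj : t j ∈ Set.Icc a b := htmem j (by omega)
      have htj1 : t (j + 1) ∈ Set.Icc a b := htmem (j + 1) hjn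
      have hdd : t (j + 1) - t j = Δ := htd j
      set lam := (x - t j) / Δ with hlam
      have hlam0 : 0 ≤ lam := div_nonneg (by linarith) hΔ0.le
      have hlam1 : lam ≤ 1 := by
        rw [hlam, div_le_one hΔ0]
        linarith
      have hlamΔ : lam * Δ = x - t j := by
        rw [hlam]; field_simp
      have hcomb : (1 - lam) • t j + lam • t (j + 1) = x := by
        simp only [smul_eq_mul]
        linear_combination hlamΔ + lam * hdd
      have hφx : φ x ≤ (1 - lam) * φ (t j) + lam * φ (t (j + 1)) := by
        have h := hφconv.2 htj htj1 (show (0:ℝ) ≤ 1 - lam by linarith)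
          (show (0:ℝ) ≤ lam from hlam0) (show (1 - lam) + lam = 1 by ring)
        rw [hcomb] at h
        simpa [smul_eq_mul] using h
      have hfx2 : f x = (1 - lam) * φ (t j) + lam * φ (t (j + 1)) := by
        rw [hfx]
        have hsx : s j * (x - t j) = lam * (φ (t (j + 1)) - φ (t j)) := by
          rw [← hlamΔ, hsdef]
          field_simp
        rw [hsx]
        ring
      constructor
      · rw [hfx2]; exact hφx
      · rw [hfx2]
        have hd1 : φ (t j) ≤ φ x + ε := by
          have hdist := hδ (t j) htj x hx (by
            rw [Real.dist_eq]
            have : |t j - x| ≤ Δ := by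
              rw [abs_le]
              constructor <;> linarith
            linarith)
          rw [Real.dist_eq] at hdist
          have := abs_lt.1 hdist
          linarith [this.1, this.2]
        have hd2 : φ (t (j + 1)) ≤ φ x + ε := by
          have hdist := hδ (t (j + 1)) htj1 x hx (by
            rw [Real.dist_eq]
            have : |t (j + 1) - x| ≤ Δ := by
              rw [abs_le]
              constructor <;> linarith
            linarith)
          rw [Real.dist_eq] at hdist
          have := abs_lt.1 hdist
          linarith [this.1, this.2]
        nlinarith [hlam0, hlam1, hd1, hd2]
    -- continuity of the approximant
    have hcont_hinge : ∀ i : ℕ, Continuous (fun x : ℝ => max (x - t i) 0) :=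
      fun i => (continuous_id.sub continuous_const).max continuous_const
    have hfc : Continuous f := by
      apply Continuous.add
      · exact continuous_const.add (continuous_const.mul (continuous_id.sub continuous_const))
      · exact continuous_finset_sum _ fun i _ => (continuous_const.mul (hcont_hinge i))
    -- integral decomposition of f
    have hfdecomp : ∀ (μ : Measure ℝ) [IsFiniteMeasure μ], μ (Set.Icc a b)ᶜ = 0 →
        ∫ x, f x ∂μ = (∫ x, (φ a + s 0 * (x - a)) ∂μ)
          + ∑ i ∈ Finset.Ico 1 n, (s i - s (i - 1)) * ∫ x, max (x - t i) 0 ∂μ := by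
      intro μ _ hμ
      have hint1 : Integrable (fun x : ℝ => φ a + s 0 * (x - a)) μ :=
        kn_integrable a b μ hμ
          (continuous_const.add (continuous_const.mul (continuous_id.sub continuous_const)))
      have hint2 : ∀ i ∈ Finset.Ico 1 n,
          Integrable (fun x : ℝ => (s i - s (i - 1)) * max (x - t i) 0) μ :=
        fun i _ => (kn_integrable a b μ hμ (hcont_hinge i)).const_mul _
      rw [hfdef]
      rw [integral_add hint1 (integrable_finset_sum _ hint2), integral_finset_sum _ hint2]
      congr 1
      apply Finset.sum_congr rfl
      intro i _
      exact integral_const_mul _ _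
    have haffd : (∫ x, (φ a + s 0 * (x - a)) ∂μp) - (∫ x, (φ a + s 0 * (x - a)) ∂μm) = 0 := by
      have he : (fun x : ℝ => φ a + s 0 * (x - a)) = fun x => s 0 * x + (φ a - s 0 * a) :=
        funext fun x => by ring
      rw [he]
      exact haff _ _
    have hDf : 0 ≤ (∫ x, f x ∂μp) - ∫ x, f x ∂μm := by
      rw [hfdecomp μp hp, hfdecomp μm hm]
      have hsum : 0 ≤ ∑ i ∈ Finset.Ico 1 n,
          ((s i - s (i - 1)) * (∫ x, max (x - t i) 0 ∂μp)
            - (s i - s (i - 1)) * ∫ x, max (x - t i) 0 ∂μm) := by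
        apply Finset.sum_nonneg
        intro i hi
        obtain ⟨hi1, hi2⟩ := Finset.mem_Ico.1 hi
        rw [← mul_sub]
        apply mul_nonneg
        · have := hsm i hi1 (by omega)
          linarith
        · exact hhinge (t i) (htmem i (by omega))
      rw [Finset.sum_sub_distrib] at hsum
      linarith
    -- final comparison
    have hle1 : (∫ x, f x ∂μp) - ε * Mp ≤ ∫ x, φ x ∂μp := by
      have he : ∫ x, (f x - ε) ∂μp = (∫ x, f x ∂μp) - ε * Mp := by
        rw [integral_sub (hip hfc) (integrable_const ε), integral_const, smul_eq_mul, measureReal_def]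
        ring
      rw [← he]
      apply integral_mono_ae ((hip hfc).sub (integrable_const ε)) (hip hφc)
      filter_upwards [ae_iff.2 hp] with y hy
      simp only [Pi.sub_apply]
      linarith [(hbound y hy).2]
    have hle2 : ∫ x, φ x ∂μm ≤ ∫ x, f x ∂μm := by
      apply integral_mono_ae (him hφc) (him hfc)
      filter_upwards [ae_iff.2 hm] with y hy
      exact (hbound y hy).1
    have hεM : ε * Mp ≤ -I / 2 := by
      rw [hεdef, div_mul_eq_mul_div, div_le_div_iff₀ (by linarith) (by norm_num)]
      nlinarith
    have : 0 ≤ I + ε * Mp := by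
      rw [hIdef]
      linarith
    linarith
end

section
/- Let f ∈ L¹((0,∞)) vanish outside [0,1]. Then the Mellin transform of f is completely monotone on (0,∞) if and only if f is nonnegative almost everywhere. -/
open MeasureTheory Set Filter Topology Metric

namespace Stmt9Aux

lemma log_pow_bound (δ : ℝ) (hδ : 0 < δ) (n : ℕ) :
    ∃ C : ℝ, 0 ≤ C ∧ ∀ t ∈ Set.Ioc (0:ℝ) 1, t ^ δ * |Real.log t| ^ n ≤ C := by
  rcases Nat.eq_zero_or_pos n with hn | hn
  · refine ⟨1, zero_le_one, fun t ht => ?_⟩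
    subst hn
    simpa using Real.rpow_le_one ht.1.le ht.2 hδ.le
  · set ε : ℝ := δ / n with hε_def
    have hn' : (0:ℝ) < n := by exact_mod_cast hn
    have hε : 0 < ε := div_pos hδ hn'
    refine ⟨(n / δ) ^ n, by positivity, fun t ht => ?_⟩
    obtain ⟨ht0, ht1⟩ := ht
    have hlog : |Real.log t| ≤ t ^ (-ε) / ε := by
      have h1 : Real.log (t ^ (-ε)) ≤ t ^ (-ε) - 1 :=
        Real.log_le_sub_one_of_pos (Real.rpow_pos_of_pos ht0 _)
      rw [Real.log_rpow ht0] at h1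
      have h2 : -Real.log t ≤ t ^ (-ε) / ε := by
        rw [le_div_iff₀ hε]
        nlinarith [Real.rpow_pos_of_pos ht0 (-ε)]
      rwa [abs_of_nonpos (Real.log_nonpos ht0.le ht1)]
    have h3 : |Real.log t| ^ n ≤ (t ^ (-ε) / ε) ^ n :=
      pow_le_pow_left₀ (abs_nonneg _) hlog n
    have h4 : t ^ δ * |Real.log t| ^ n ≤ t ^ δ * (t ^ (-ε) / ε) ^ n :=
      mul_le_mul_of_nonneg_left h3 (Real.rpow_nonneg ht0.le δ)
    refine h4.trans (le_of_eq ?_)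
    have h5 : (t ^ (-ε)) ^ n = t ^ (-ε * n) := by
      rw [← Real.rpow_natCast (t ^ (-ε)) n, ← Real.rpow_mul ht0.le]
    have h6 : -ε * n = -δ := by
      field_simp [hε_def]
      rw [hε_def, div_mul_cancel₀ δ hn'.ne']
    rw [div_pow, h5, h6]
    rw [div_eq_mul_inv, ← mul_assoc, ← Real.rpow_add ht0]
    have h7 : δ + -δ = 0 := by ring
    rw [h7, Real.rpow_zero, one_mul, ← inv_pow]
    congr 1
    rw [hε_def, inv_div]

lemma integrableOn_Ioi_iff_Ioc {g : ℝ → ℝ} (hg : ∀ t : ℝ, 1 < t → g t = 0) :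
    IntegrableOn g (Set.Ioi (0:ℝ)) ↔ IntegrableOn g (Set.Ioc (0:ℝ) 1) := by
  have hsplit : Set.Ioc (0:ℝ) 1 ∪ Set.Ioi 1 = Set.Ioi (0:ℝ) :=
    Set.Ioc_union_Ioi_eq_Ioi zero_le_one
  have h0 : IntegrableOn g (Set.Ioi (1:ℝ)) := by
    apply (integrable_zero _ _ _).congr
    exact (ae_restrict_iff' measurableSet_Ioi).mpr (ae_of_all _ fun t ht => (hg t ht).symm)
  constructor
  · intro h; exact h.mono_set Set.Ioc_subset_Ioi_self
  · intro h
    rw [← hsplit]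
    exact h.union h0

lemma integral_Ioi_eq_Ioc {g : ℝ → ℝ} (hg : ∀ t : ℝ, 1 < t → g t = 0) :
    ∫ t in Set.Ioi (0:ℝ), g t = ∫ t in Set.Ioc (0:ℝ) 1, g t := by
  have hsplit : Set.Ioc (0:ℝ) 1 ∪ Set.Ioi 1 = Set.Ioi (0:ℝ) :=
    Set.Ioc_union_Ioi_eq_Ioi zero_le_one
  have h0 : IntegrableOn g (Set.Ioi (1:ℝ)) := by
    apply (integrable_zero _ _ _).congr
    exact (ae_restrict_iff' measurableSet_Ioi).mpr (ae_of_all _ fun t ht => (hg t ht).symm)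
  by_cases hInt : IntegrableOn g (Set.Ioc (0:ℝ) 1)
  · rw [← hsplit, setIntegral_union (Set.Ioc_disjoint_Ioi le_rfl) measurableSet_Ioi hInt h0]
    have : ∫ t in Set.Ioi (1:ℝ), g t = 0 := by
      apply integral_eq_zero_of_ae
      exact (ae_restrict_iff' measurableSet_Ioi).mpr (ae_of_all _ fun t ht => hg t ht)
    rw [this, add_zero]
  · have h1 : ¬ IntegrableOn g (Set.Ioi (0:ℝ)) := fun h => hInt ((integrableOn_Ioi_iff_Ioc hg).mp h)
    rw [integral_undef h1, integral_undef hInt]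


variable {f : ℝ → ℝ}

lemma aesm (hf : IntegrableOn f (Set.Ioi 0)) {w : ℝ → ℝ} (hw : Continuous w) (m : ℕ) (u : ℝ) :
    AEStronglyMeasurable (fun t => f t * Real.log t ^ m * w t * t ^ (u - 1))
      (volume.restrict (Set.Ioi (0:ℝ))) := by
  have h1 : AEStronglyMeasurable f (volume.restrict (Set.Ioi (0:ℝ))) := hf.1
  have h2 : AEStronglyMeasurable (fun t : ℝ => t ^ (u - 1))
      (volume.restrict (Set.Ioi (0:ℝ))) := by
    apply ContinuousOn.aestronglyMeasurable _ measurableSet_Ioi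
    intro t ht
    exact (Real.continuousAt_rpow_const t _ (Or.inl (ne_of_gt ht))).continuousWithinAt
  exact ((h1.mul ((Real.measurable_log.pow_const m).aestronglyMeasurable)).mul
    hw.aestronglyMeasurable).mul h2

lemma aesm' (hf : IntegrableOn f (Set.Ioi 0)) {w : ℝ → ℝ} (hw : Continuous w) (m : ℕ) (u : ℝ) :
    AEStronglyMeasurable (fun t => f t * Real.log t ^ m * w t * t ^ (u - 1))
      (volume.restrict (Set.Ioc (0:ℝ) 1)) := by
  exact (aesm hf hw m u).mono_measure
    (Measure.restrict_mono Set.Ioc_subset_Ioi_self le_rfl)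


lemma master_int (hf : IntegrableOn f (Set.Ioi 0))
    (hsupp : ∀ t : ℝ, t ∉ Set.Icc (0 : ℝ) 1 → f t = 0)
    {a : ℝ} (ha : IntegrableOn (fun t => f t * t ^ (a - 1)) (Set.Ioc 0 1))
    {w : ℝ → ℝ} (hw : Continuous w) (hw1 : ∀ t ∈ Set.Ioc (0:ℝ) 1, |w t| ≤ 1)
    (m : ℕ) {σ : ℝ} (hσ : a < σ) :
    IntegrableOn (fun t => f t * Real.log t ^ m * w t * t ^ (σ - 1)) (Set.Ioi (0:ℝ)) := by
  have hvan : ∀ t : ℝ, 1 < t → f t * Real.log t ^ m * w t * t ^ (σ - 1) = 0 := by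
    intro t ht
    have : f t = 0 := hsupp t (by rintro ⟨-, h2⟩; linarith)
    simp [this]
  rw [integrableOn_Ioi_iff_Ioc hvan]
  obtain ⟨C, hC0, hC⟩ := log_pow_bound (σ - a) (by linarith) m
  apply Integrable.mono (ha.const_mul C) (aesm' hf hw m σ)
  filter_upwards [ae_restrict_mem measurableSet_Ioc] with t ht
  obtain ⟨ht0, ht1⟩ := ht
  have hrpow : t ^ (σ - 1) = t ^ (a - 1) * t ^ (σ - a) := by
    rw [← Real.rpow_add ht0]; ring_nf
  have h1 : ‖f t * Real.log t ^ m * w t * t ^ (σ - 1)‖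
      = (|f t| * t ^ (a - 1)) * ((t ^ (σ - a) * |Real.log t| ^ m) * |w t|) := by
    rw [hrpow]
    rw [Real.norm_eq_abs, abs_mul, abs_mul, abs_mul, abs_pow, abs_mul,
      abs_of_nonneg (Real.rpow_nonneg ht0.le (a-1)),
      abs_of_nonneg (Real.rpow_nonneg ht0.le (σ-a))]
    ring
  have h2 : (t ^ (σ - a) * |Real.log t| ^ m) * |w t| ≤ C * 1 := by
    apply mul_le_mul (hC t ⟨ht0, ht1⟩) (hw1 t ⟨ht0, ht1⟩) (abs_nonneg _) hC0
  have h3 : ‖C * (f t * t ^ (a - 1))‖ = (|f t| * t ^ (a - 1)) * C := by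
    rw [Real.norm_eq_abs, abs_mul, abs_mul, abs_of_nonneg hC0,
      abs_of_nonneg (Real.rpow_nonneg ht0.le (a-1))]
    ring
  rw [h1, h3]
  have h4 : 0 ≤ |f t| * t ^ (a - 1) := by positivity
  nlinarith [mul_le_mul_of_nonneg_left h2 h4]


lemma master_deriv (hf : IntegrableOn f (Set.Ioi 0))
    (hsupp : ∀ t : ℝ, t ∉ Set.Icc (0 : ℝ) 1 → f t = 0)
    {a : ℝ} (ha : IntegrableOn (fun t => f t * t ^ (a - 1)) (Set.Ioc 0 1))
    {w : ℝ → ℝ} (hw : Continuous w) (hw1 : ∀ t ∈ Set.Ioc (0:ℝ) 1, |w t| ≤ 1)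
    (m : ℕ) {σ : ℝ} (hσ : a < σ) :
    HasDerivAt (fun u => ∫ t in Set.Ioi (0:ℝ), f t * Real.log t ^ m * w t * t ^ (u - 1))
      (∫ t in Set.Ioi (0:ℝ), f t * Real.log t ^ (m+1) * w t * t ^ (σ - 1)) σ := by
  obtain ⟨C, hC0, hC⟩ := log_pow_bound ((σ - a)/2) (by linarith) (m+1)
  set ε : ℝ := (σ - a)/2 with hε_def
  have hε : 0 < ε := by simp only [hε_def]; linarith
  set bound : ℝ → ℝ := fun t => if t ≤ 1 then C * |f t * t ^ (a - 1)| else 0 with hbound_def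
  have key := hasDerivAt_integral_of_dominated_loc_of_deriv_le (μ := volume.restrict (Set.Ioi 0))
    (F := fun u t => f t * Real.log t ^ m * w t * t ^ (u - 1))
    (F' := fun u t => f t * Real.log t ^ (m+1) * w t * t ^ (u - 1))
    (x₀ := σ) (bound := bound) (ball_mem_nhds σ hε)
    (Eventually.of_forall fun u => aesm hf hw m u)
    (master_int hf hsupp ha hw hw1 m hσ)
    (aesm hf hw (m+1) σ)
    ?_ ?_ ?_
  · exact key.2
  · -- bound
    filter_upwards [ae_restrict_mem measurableSet_Ioi] with t ht u hu
    by_cases ht1 : t ≤ 1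
    · have ht0 : 0 < t := ht
      have hu' : a < u - ε := by
        have := abs_lt.mp (mem_ball_iff_norm.mp hu)
        simp only [hε_def] at this ⊢
        linarith [this.1]
      have hrle : t ^ (u - 1) ≤ t ^ (a - 1) * t ^ ε := by
        have h1 : t ^ (u - 1) ≤ t ^ (a + ε - 1) :=
          Real.rpow_le_rpow_of_exponent_ge ht0 ht1 (by linarith)
        have h2 : t ^ (a + ε - 1) = t ^ (a - 1) * t ^ ε := by
          rw [← Real.rpow_add ht0]; ring_nf
        rw [← h2]; exact h1
      have hnorm : ‖f t * Real.log t ^ (m+1) * w t * t ^ (u - 1)‖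
          = (|f t| * |Real.log t| ^ (m+1) * |w t|) * t ^ (u - 1) := by
        rw [Real.norm_eq_abs, abs_mul, abs_mul, abs_mul, abs_pow,
          abs_of_nonneg (Real.rpow_nonneg ht0.le (u-1))]
      rw [hnorm, hbound_def]
      simp only [if_pos ht1]
      have h5 : (|f t| * |Real.log t| ^ (m+1) * |w t|) * t ^ (u - 1)
          ≤ (|f t| * |Real.log t| ^ (m+1) * 1) * (t ^ (a - 1) * t ^ ε) := by
        apply mul_le_mul _ hrle (Real.rpow_nonneg ht0.le _) (by positivity)
        apply mul_le_mul_of_nonneg_left (hw1 t ⟨ht0, ht1⟩) (by positivity)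
      refine h5.trans ?_
      have h6 : t ^ ε * |Real.log t| ^ (m+1) ≤ C := hC t ⟨ht0, ht1⟩
      have h7 : |f t * t ^ (a-1)| = |f t| * t ^ (a-1) := by
        rw [abs_mul, abs_of_nonneg (Real.rpow_nonneg ht0.le _)]
      rw [h7]
      have h8 : 0 ≤ |f t| * t ^ (a - 1) := by positivity
      nlinarith [mul_le_mul_of_nonneg_left h6 (abs_nonneg (f t)),
        mul_le_mul_of_nonneg_left (mul_le_mul_of_nonneg_left h6 (abs_nonneg (f t)))
          (Real.rpow_nonneg ht0.le (a-1))]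
    · push_neg at ht1
      have hf0 : f t = 0 := hsupp t (by rintro ⟨-, h2⟩; linarith)
      simp [hf0, hbound_def, if_neg (not_le.mpr ht1)]
  · -- integrability of bound
    have : IntegrableOn bound (Set.Ioi (0:ℝ)) := by
      rw [integrableOn_Ioi_iff_Ioc (fun t ht => by simp [hbound_def, if_neg (not_le.mpr ht)])]
      apply ((ha.abs.const_mul C)).congr
      filter_upwards [ae_restrict_mem measurableSet_Ioc] with t ht
      simp [hbound_def, if_pos ht.2]
    exact this
  · -- differentiability
    filter_upwards [ae_restrict_mem measurableSet_Ioi] with t ht u hu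
    have ht0 : (0:ℝ) < t := ht
    have h1 : HasDerivAt (fun u : ℝ => t ^ (u - 1)) (t ^ (u - 1) * Real.log t * 1) u := by
      exact ((Real.hasStrictDerivAt_const_rpow ht0 (u-1)).hasDerivAt).comp u
        ((hasDerivAt_id u).sub_const 1)
    have h2 := h1.const_mul (f t * Real.log t ^ m * w t)
    convert h2 using 1
    · rfl
    ring

lemma iter_eq (hf : IntegrableOn f (Set.Ioi 0))
    (hsupp : ∀ t : ℝ, t ∉ Set.Icc (0 : ℝ) 1 → f t = 0)
    {a : ℝ} (ha : IntegrableOn (fun t => f t * t ^ (a - 1)) (Set.Ioc 0 1)) :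
    ∀ n : ℕ, ∀ {σ : ℝ}, a < σ →
      iteratedDeriv n (fun u => ∫ t in Set.Ioi (0:ℝ), f t * t ^ (u - 1)) σ
        = ∫ t in Set.Ioi (0:ℝ), f t * Real.log t ^ n * (1:ℝ) * t ^ (σ - 1) := by
  have hw : Continuous (fun _ : ℝ => (1:ℝ)) := continuous_const
  have hw1 : ∀ t ∈ Set.Ioc (0:ℝ) 1, |(1:ℝ)| ≤ 1 := fun t _ => by norm_num
  intro n
  induction n with
  | zero =>
    intro σ hσ
    rw [iteratedDeriv_zero]
    apply integral_congr_ae (ae_of_all _ fun t => ?_)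
    simp
  | succ n ih =>
    intro σ hσ
    rw [iteratedDeriv_succ]
    have hev : iteratedDeriv n (fun u => ∫ t in Set.Ioi (0:ℝ), f t * t ^ (u - 1))
        =ᶠ[𝓝 σ] fun u => ∫ t in Set.Ioi (0:ℝ), f t * Real.log t ^ n * (1:ℝ) * t ^ (u - 1) := by
      filter_upwards [isOpen_Ioi.mem_nhds hσ] with u hu using ih hu
    rw [hev.deriv_eq]
    exact (master_deriv hf hsupp ha hw hw1 n hσ).deriv

lemma deriv_eq_zero_of_left {g : ℝ → ℝ} {c s : ℝ} (hcs : c < s)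
    (hg : ∀ x ∈ Set.Ioo c s, g x = 0) : deriv g s = 0 := by
  by_cases hdiff : DifferentiableAt ℝ g s
  · have hclos : s ∈ closure (Set.Ioo c s) := by
      rw [closure_Ioo hcs.ne]; exact ⟨hcs.le, le_rfl⟩
    have hne : (𝓝[Set.Ioo c s] s).NeBot := mem_closure_iff_nhdsWithin_neBot.mp hclos
    have hgs : g s = 0 := by
      have h1 : Tendsto g (𝓝[Set.Ioo c s] s) (𝓝 (g s)) :=
        hdiff.continuousAt.continuousWithinAt
      have h2 : Tendsto g (𝓝[Set.Ioo c s] s) (𝓝 0) := by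
        apply Tendsto.congr' _ tendsto_const_nhds
        filter_upwards [self_mem_nhdsWithin] with x hx using (hg x hx).symm
      exact tendsto_nhds_unique h1 h2
    have hd1 : HasDerivWithinAt g (deriv g s) (Set.Ioo c s) s :=
      hdiff.hasDerivAt.hasDerivWithinAt
    have hd2 : HasDerivWithinAt g 0 (Set.Ioo c s) s := by
      exact (hasDerivWithinAt_const s _ (0:ℝ)).congr (fun x hx => hg x hx) hgs
    have hu : UniqueDiffWithinAt ℝ (Set.Ioo c s) s := by
      apply uniqueDiffWithinAt_convex (convex_Ioo c s)
      · rw [interior_Ioo]; exact Set.nonempty_Ioo.mpr hcs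
      · rw [closure_Ioo hcs.ne]; exact ⟨hcs.le, le_rfl⟩
    exact (hd1.derivWithin hu).symm.trans (hd2.derivWithin hu)
  · exact deriv_zero_of_not_differentiableAt hdiff


lemma integrand_nonneg (hsupp : ∀ t : ℝ, t ∉ Set.Icc (0 : ℝ) 1 → f t = 0)
    (hpos : ∀ᵐ t ∂(volume.restrict (Set.Ioi (0:ℝ))), 0 ≤ f t) (n : ℕ) (s : ℝ) :
    0 ≤ᵐ[volume.restrict (Set.Ioi (0:ℝ))]
      fun t => (-1:ℝ)^n * (f t * Real.log t ^ n * (1:ℝ) * t ^ (s - 1)) := by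
  filter_upwards [hpos, ae_restrict_mem measurableSet_Ioi] with t hft ht
  have key : (-1:ℝ)^n * (f t * Real.log t ^ n * (1:ℝ) * t ^ (s - 1))
      = f t * (-Real.log t) ^ n * t ^ (s - 1) := by
    rw [neg_pow]; ring
  rw [key]
  by_cases ht1 : t ≤ 1
  · apply mul_nonneg (mul_nonneg hft (pow_nonneg _ n)) (Real.rpow_nonneg (le_of_lt ht) _)
    simpa using Real.log_nonpos (le_of_lt ht) ht1
  · have : f t = 0 := hsupp t (by rintro ⟨-, h2⟩; linarith)
    simp [this]

lemma forward (hf : IntegrableOn f (Set.Ioi 0))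
    (hsupp : ∀ t : ℝ, t ∉ Set.Icc (0 : ℝ) 1 → f t = 0)
    (hpos : ∀ᵐ t ∂(volume.restrict (Set.Ioi (0:ℝ))), 0 ≤ f t)
    (n : ℕ) (s : ℝ) (hs : 0 < s) :
    0 ≤ (-1:ℝ)^n *
      iteratedDeriv n (fun u => ∫ t in Set.Ioi (0:ℝ), f t * t ^ (u - 1)) s := by
  by_cases hex : ∃ a, a < s ∧ IntegrableOn (fun t => f t * t ^ (a - 1)) (Set.Ioc 0 1)
  · obtain ⟨a, has, ha⟩ := hex
    rw [iter_eq hf hsupp ha n has, ← integral_const_mul]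
    exact setIntegral_nonneg_of_ae_restrict (integrand_nonneg hsupp hpos n s)
  · push_neg at hex
    have hφ0 : ∀ σ ∈ Set.Ioo (s-1) s, (∫ t in Set.Ioi (0:ℝ), f t * t ^ (σ - 1)) = 0 := by
      intro σ hσ
      apply integral_undef
      intro hI
      exact hex σ hσ.2 (IntegrableOn.mono_set hI Set.Ioc_subset_Ioi_self)
    have hIter : ∀ m : ℕ, ∀ σ ∈ Set.Ioo (s-1) s,
        iteratedDeriv m (fun u => ∫ t in Set.Ioi (0:ℝ), f t * t ^ (u - 1)) σ = 0 := by
      intro m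
      induction m with
      | zero => simpa [iteratedDeriv_zero] using hφ0
      | succ m ih =>
        intro σ hσ
        rw [iteratedDeriv_succ]
        have hev : iteratedDeriv m (fun u => ∫ t in Set.Ioi (0:ℝ), f t * t ^ (u - 1))
            =ᶠ[𝓝 σ] fun _ => 0 := by
          filter_upwards [isOpen_Ioo.mem_nhds hσ] with u hu using ih u hu
        rw [hev.deriv_eq, deriv_const]
    cases n with
    | zero =>
      rw [iteratedDeriv_zero]
      simp only [pow_zero, one_mul]
      apply setIntegral_nonneg_of_ae_restrict
      have := integrand_nonneg hsupp hpos 0 s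
      filter_upwards [this] with t ht
      simpa using ht
    | succ m =>
      rw [iteratedDeriv_succ,
        deriv_eq_zero_of_left (show s - 1 < s by linarith) (hIter m), mul_zero]


lemma ha1 (hf : IntegrableOn f (Set.Ioi 0)) :
    IntegrableOn (fun t => f t * t ^ ((1:ℝ) - 1)) (Set.Ioc 0 1) := by
  apply (hf.mono_set Set.Ioc_subset_Ioi_self).congr
  apply ae_of_all
  intro t
  norm_num

lemma hwk (k : ℕ) : Continuous (fun t : ℝ => (1-t)^k) := by fun_prop

lemma hwk1 (k : ℕ) : ∀ t ∈ Set.Ioc (0:ℝ) 1, |(1-t)^k| ≤ 1 := by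
  intro t ht
  rw [abs_pow]
  apply pow_le_one₀ (abs_nonneg _)
  rw [abs_le]
  constructor <;> [linarith [ht.2]; linarith [ht.1]]

lemma key_pos (hf : IntegrableOn f (Set.Ioi 0))
    (hsupp : ∀ t : ℝ, t ∉ Set.Icc (0 : ℝ) 1 → f t = 0)
    (hcm : ∀ (n : ℕ), ∀ s : ℝ, 0 < s →
      0 ≤ (-1 : ℝ) ^ n *
        iteratedDeriv n (fun u => ∫ t in Set.Ioi (0:ℝ), f t * t ^ (u - 1)) s) :
    ∀ k m : ℕ, ∀ s : ℝ, 1 < s →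
      0 ≤ (-1:ℝ)^m * ∫ t in Set.Ioi (0:ℝ), f t * Real.log t ^ m * (1-t)^k * t ^ (s - 1) := by
  intro k
  induction k with
  | zero =>
    intro m s hs
    have h1 := hcm m s (lt_trans zero_lt_one hs)
    rw [iter_eq hf hsupp (ha1 hf) m hs] at h1
    have h2 : (∫ t in Set.Ioi (0:ℝ), f t * Real.log t ^ m * (1-t)^0 * t ^ (s - 1))
        = ∫ t in Set.Ioi (0:ℝ), f t * Real.log t ^ m * (1:ℝ) * t ^ (s - 1) := by
      apply integral_congr_ae (ae_of_all _ fun t => by norm_num)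
    rw [h2]
    exact h1
  | succ k ih =>
    intro m s hs
    have hint : ∀ (m' : ℕ) (k' : ℕ) (σ : ℝ), 1 < σ →
        IntegrableOn (fun t => f t * Real.log t ^ m' * (1-t)^k' * t ^ (σ - 1))
          (Set.Ioi (0:ℝ)) :=
      fun m' k' σ hσ => master_int hf hsupp (ha1 hf) (hwk k') (hwk1 k') m' hσ
    -- subtraction identity
    have hsub : (∫ t in Set.Ioi (0:ℝ), f t * Real.log t ^ m * (1-t)^(k+1) * t ^ (s - 1))
        = (∫ t in Set.Ioi (0:ℝ), f t * Real.log t ^ m * (1-t)^k * t ^ (s - 1))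
          - ∫ t in Set.Ioi (0:ℝ), f t * Real.log t ^ m * (1-t)^k * t ^ (s + 1 - 1) := by
      rw [← integral_sub (hint m k s hs) (hint m k (s+1) (by linarith))]
      apply setIntegral_congr_ae measurableSet_Ioi
      apply ae_of_all
      intro t ht
      have ht0 : (0:ℝ) < t := ht
      have h1 : t ^ (s + 1 - 1) = t ^ (s - 1) * t := by
        rw [show s + 1 - 1 = (s - 1) + 1 by ring, Real.rpow_add ht0, Real.rpow_one]
      rw [h1]
      ring
    -- antitonicity of the k-th integral
    set h : ℝ → ℝ := fun σ => (-1:ℝ)^m * ∫ t in Set.Ioi (0:ℝ),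
      f t * Real.log t ^ m * (1-t)^k * t ^ (σ - 1) with hh_def
    have hder : ∀ σ : ℝ, 1 < σ → HasDerivAt h
        ((-1:ℝ)^m * ∫ t in Set.Ioi (0:ℝ),
          f t * Real.log t ^ (m+1) * (1-t)^k * t ^ (σ - 1)) σ := by
      intro σ hσ
      exact (master_deriv hf hsupp (ha1 hf) (hwk k) (hwk1 k) m hσ).const_mul ((-1:ℝ)^m)
    have hanti : AntitoneOn h (Set.Icc s (s+1)) := by
      apply antitoneOn_of_deriv_nonpos (convex_Icc s (s+1))
      · intro σ hσ
        exact (hder σ (lt_of_lt_of_le hs hσ.1)).continuousAt.continuousWithinAt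
      · intro σ hσ
        rw [interior_Icc] at hσ
        exact ((hder σ (lt_trans hs hσ.1)).differentiableAt).differentiableWithinAt
      · intro σ hσ
        rw [interior_Icc] at hσ
        have hσ1 : 1 < σ := lt_trans hs hσ.1
        rw [(hder σ hσ1).deriv]
        have := ih (m+1) σ hσ1
        have hsign : (-1:ℝ)^(m+1) = -(-1:ℝ)^m := by rw [pow_succ]; ring
        rw [hsign] at this
        linarith
    have hle : h (s+1) ≤ h s := by
      apply hanti (Set.mem_Icc.mpr ⟨le_rfl, by linarith⟩)
        (Set.mem_Icc.mpr ⟨by linarith, le_rfl⟩) (by linarith)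
    rw [hsub, mul_sub]
    simp only [hh_def] at hle
    linarith


lemma moment (hf : IntegrableOn f (Set.Ioi 0))
    (hsupp : ∀ t : ℝ, t ∉ Set.Icc (0 : ℝ) 1 → f t = 0)
    (hcm : ∀ (n : ℕ), ∀ s : ℝ, 0 < s →
      0 ≤ (-1 : ℝ) ^ n *
        iteratedDeriv n (fun u => ∫ t in Set.Ioi (0:ℝ), f t * t ^ (u - 1)) s) :
    ∀ j k : ℕ, 0 ≤ ∫ t in Set.Ioc (0:ℝ) 1, (f t * t) * (t^j * (1-t)^k) := by
  intro j k
  have h1 := key_pos hf hsupp hcm k 0 ((j:ℝ)+2) (by have := Nat.cast_nonneg (α := ℝ) j; linarith)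
  simp only [pow_zero, one_mul] at h1
  have hvan : ∀ t : ℝ, 1 < t → f t * (1:ℝ) * (1-t)^k * t ^ ((j:ℝ)+2 - 1) = 0 := by
    intro t ht
    have : f t = 0 := hsupp t (by rintro ⟨-, h2⟩; linarith)
    simp [this]
  rw [integral_Ioi_eq_Ioc hvan] at h1
  have h2 : (∫ t in Set.Ioc (0:ℝ) 1, f t * (1:ℝ) * (1-t)^k * t ^ ((j:ℝ)+2 - 1))
      = ∫ t in Set.Ioc (0:ℝ) 1, (f t * t) * (t^j * (1-t)^k) := by
    apply setIntegral_congr_fun measurableSet_Ioc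
    intro t ht
    have hexp : (j:ℝ) + 2 - 1 = ((j+1 : ℕ) : ℝ) := by push_cast; ring
    simp only
    rw [hexp, Real.rpow_natCast, pow_succ]
    ring
  rw [h2] at h1
  exact h1


open unitInterval in
lemma bern_pos (hf : IntegrableOn f (Set.Ioi 0))
    (hsupp : ∀ t : ℝ, t ∉ Set.Icc (0 : ℝ) 1 → f t = 0)
    (hcm : ∀ (n : ℕ), ∀ s : ℝ, 0 < s →
      0 ≤ (-1 : ℝ) ^ n *
        iteratedDeriv n (fun u => ∫ t in Set.Ioi (0:ℝ), f t * t ^ (u - 1)) s) :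
    ∀ h : ℝ → ℝ, Continuous h → (∀ x, 0 ≤ h x) →
      0 ≤ ∫ t in Set.Ioc (0:ℝ) 1, (f t * t) * h t := by
  have hFint : IntegrableOn (fun t => f t * t) (Set.Ioc (0:ℝ) 1) := by
    have h1 : Integrable (fun t : ℝ => t * f t) (volume.restrict (Set.Ioc (0:ℝ) 1)) := by
      apply Integrable.bdd_mul (c := 1) (hf.mono_set Set.Ioc_subset_Ioi_self)
        continuous_id.aestronglyMeasurable
      filter_upwards [ae_restrict_mem measurableSet_Ioc] with t ht
      simp only [id_eq, Real.norm_eq_abs]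
      rw [abs_of_pos ht.1]; exact ht.2
    exact h1.congr (ae_of_all _ fun t => mul_comm t (f t))
  have Hq : ∀ q : ℝ → ℝ, Continuous q →
      IntegrableOn (fun t => (f t * t) * q t) (Set.Ioc (0:ℝ) 1) := by
    intro q hq
    obtain ⟨Cq, hCq⟩ := isCompact_Icc.exists_bound_of_continuousOn
      (s := Set.Icc (0:ℝ) 1) hq.continuousOn
    have h1 : Integrable (fun t : ℝ => q t * (f t * t)) (volume.restrict (Set.Ioc (0:ℝ) 1)) := by
      apply Integrable.bdd_mul (c := Cq) hFint hq.aestronglyMeasurable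
      filter_upwards [ae_restrict_mem measurableSet_Ioc] with t ht
      exact hCq t (Set.Ioc_subset_Icc_self ht)
    exact h1.congr (ae_of_all _ fun t => mul_comm (q t) _)
  have hmom := moment hf hsupp hcm
  -- positivity against continuous maps on I
  have C1 : ∀ g : C(I, ℝ), (∀ x, 0 ≤ g x) →
      0 ≤ ∫ t in Set.Ioc (0:ℝ) 1, (f t * t) * g (Set.projIcc 0 1 zero_le_one t) := by
    intro g hg
    set L : C(I, ℝ) → ℝ :=
      fun g' => ∫ t in Set.Ioc (0:ℝ) 1, (f t * t) * g' (Set.projIcc 0 1 zero_le_one t) with hL_def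
    have hLint : ∀ g' : C(I, ℝ), IntegrableOn
        (fun t => (f t * t) * g' (Set.projIcc 0 1 zero_le_one t)) (Set.Ioc (0:ℝ) 1) :=
      fun g' => Hq _ (g'.continuous.comp continuous_projIcc)
    have hLB : ∀ n : ℕ, 0 ≤ L (bernsteinApproximation n g) := by
      intro n
      have hexp : L (bernsteinApproximation n g) = ∑ k : Fin (n+1),
          ∫ t in Set.Ioc (0:ℝ) 1, (f t * t) *
            (g (bernstein.z k) * bernstein n k (Set.projIcc 0 1 zero_le_one t)) := by
        rw [hL_def, ← integral_finset_sum]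
        · apply setIntegral_congr_fun measurableSet_Ioc
          intro t _
          simp only [bernsteinApproximation, ContinuousMap.coe_sum, Finset.sum_apply,
            ContinuousMap.coe_smul, Pi.smul_apply, smul_eq_mul]
          rw [Finset.mul_sum]
          refine Finset.sum_congr rfl fun i _ => ?_
          simp only [ContinuousMap.mul_apply, ContinuousMap.const_apply]
          ring
        · intro k _
          have : Continuous (fun t : ℝ =>
              g (bernstein.z k) * bernstein n k (Set.projIcc 0 1 zero_le_one t)) :=
            continuous_const.mul ((bernstein n k).continuous.comp continuous_projIcc)
          exact Hq _ this
      rw [hexp]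
      apply Finset.sum_nonneg
      intro k _
      have h2 : (∫ t in Set.Ioc (0:ℝ) 1, (f t * t) *
            (g (bernstein.z k) * bernstein n k (Set.projIcc 0 1 zero_le_one t)))
          = g (bernstein.z k) * ((n.choose k : ℝ) *
            ∫ t in Set.Ioc (0:ℝ) 1, (f t * t) * (t^(k:ℕ) * (1-t)^(n-(k:ℕ)))) := by
        rw [← integral_const_mul, ← integral_const_mul]
        apply setIntegral_congr_fun measurableSet_Ioc
        intro t ht
        have hproj : Set.projIcc 0 1 zero_le_one t = ⟨t, ⟨ht.1.le, ht.2⟩⟩ :=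
          Set.projIcc_of_mem zero_le_one ⟨ht.1.le, ht.2⟩
        simp only [hproj, bernstein_apply]
        push_cast
        ring
      rw [h2]
      apply mul_nonneg (hg _)
      exact mul_nonneg (by positivity) (hmom (k:ℕ) (n-(k:ℕ)))
    -- limit
    set M : ℝ := ∫ t in Set.Ioc (0:ℝ) 1, |f t * t| with hM_def
    have hM0 : 0 ≤ M := by
      rw [hM_def]; exact setIntegral_nonneg measurableSet_Ioc fun t _ => abs_nonneg _
    have hdist : ∀ g' : C(I, ℝ), dist (L g') (L g) ≤ dist g' g * M := by
      intro g'
      rw [Real.dist_eq, hL_def]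
      rw [← integral_sub (hLint g') (hLint g)]
      have h3 : (∫ t in Set.Ioc (0:ℝ) 1,
          ((f t * t) * g' (Set.projIcc 0 1 zero_le_one t)
            - (f t * t) * g (Set.projIcc 0 1 zero_le_one t)))
          = ∫ t in Set.Ioc (0:ℝ) 1, (f t * t) *
              ((g' - g) (Set.projIcc 0 1 zero_le_one t)) := by
        apply setIntegral_congr_fun measurableSet_Ioc
        intro t _
        simp only [ContinuousMap.coe_sub, Pi.sub_apply]
        ring
      rw [h3]
      have h4 : |∫ t in Set.Ioc (0:ℝ) 1, (f t * t) *
          ((g' - g) (Set.projIcc 0 1 zero_le_one t))|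
          ≤ ∫ t in Set.Ioc (0:ℝ) 1, |f t * t| * ‖g' - g‖ := by
        refine (Real.norm_eq_abs _ ▸ norm_integral_le_integral_norm _).trans ?_
        simp only [Real.norm_eq_abs]
        apply integral_mono (Hq _ ((g' - g).continuous.comp continuous_projIcc)).abs
          (hFint.abs.mul_const _)
        intro t
        simp only [Function.comp_apply]
        rw [abs_mul]
        exact mul_le_mul_of_nonneg_left
          (by simpa [Real.norm_eq_abs] using
            ContinuousMap.norm_coe_le_norm (g' - g) (Set.projIcc 0 1 zero_le_one t))
          (abs_nonneg _)
      refine h4.trans ?_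
      rw [integral_mul_const, dist_eq_norm]
      rw [mul_comm]
    have htend : Tendsto (fun n => L (bernsteinApproximation n g)) atTop (𝓝 (L g)) := by
      rw [tendsto_iff_dist_tendsto_zero]
      apply squeeze_zero (fun n => dist_nonneg) (fun n => hdist _)
      have h5 : Tendsto (fun n => dist (bernsteinApproximation n g) g) atTop (𝓝 0) :=
        tendsto_iff_dist_tendsto_zero.mp (bernsteinApproximation_uniform g)
      simpa using h5.mul_const M
    exact ge_of_tendsto' htend hLB
  intro h hcont hpos
  have hg : ∀ x : I, 0 ≤ (⟨fun x : I => h x, hcont.comp continuous_subtype_val⟩ : C(I, ℝ)) x :=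
    fun x => hpos x
  have := C1 _ hg
  refine le_trans this (le_of_eq ?_)
  apply setIntegral_congr_fun measurableSet_Ioc
  intro t ht
  have hproj : Set.projIcc 0 1 zero_le_one t = ⟨t, ⟨ht.1.le, ht.2⟩⟩ :=
    Set.projIcc_of_mem zero_le_one ⟨ht.1.le, ht.2⟩
  simp [hproj]


lemma interval_pos (hf : IntegrableOn f (Set.Ioi 0))
    (hsupp : ∀ t : ℝ, t ∉ Set.Icc (0 : ℝ) 1 → f t = 0)
    (hcm : ∀ (n : ℕ), ∀ s : ℝ, 0 < s →
      0 ≤ (-1 : ℝ) ^ n *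
        iteratedDeriv n (fun u => ∫ t in Set.Ioi (0:ℝ), f t * t ^ (u - 1)) s) :
    ∀ a b : ℝ, 0 ≤ ∫ t in Set.Ioc a b, (Set.Ioc (0:ℝ) 1).indicator (fun t => f t * t) t := by
  have hFint : IntegrableOn (fun t => f t * t) (Set.Ioc (0:ℝ) 1) := by
    have h1 : Integrable (fun t : ℝ => t * f t) (volume.restrict (Set.Ioc (0:ℝ) 1)) := by
      apply Integrable.bdd_mul (c := 1) (hf.mono_set Set.Ioc_subset_Ioi_self)
        continuous_id.aestronglyMeasurable
      filter_upwards [ae_restrict_mem measurableSet_Ioc] with t ht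
      simp only [id_eq, Real.norm_eq_abs]
      rw [abs_of_pos ht.1]; exact ht.2
    exact h1.congr (ae_of_all _ fun t => mul_comm t (f t))
  intro a b
  set gN : ℕ → ℝ → ℝ := fun n t =>
    max 0 (min 1 (min (((n:ℝ)+1) * (t - a)) (((n:ℝ)+1) * (b + 1/((n:ℝ)+1) - t)))) with hgN_def
  have hcont : ∀ n, Continuous (gN n) := by
    intro n
    apply continuous_const.max (continuous_const.min ((Continuous.min _ _)))
    · exact continuous_const.mul (continuous_id.sub continuous_const)
    · exact continuous_const.mul (continuous_const.sub continuous_id)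
  have hnonneg : ∀ n t, 0 ≤ gN n t := fun n t => le_max_left _ _
  have hle1 : ∀ n t, gN n t ≤ 1 := fun n t => max_le zero_le_one (min_le_left _ _)
  have hpt : ∀ t : ℝ, Tendsto (fun n => gN n t) atTop
      (𝓝 ((Set.Ioc a b).indicator (fun _ => (1:ℝ)) t)) := by
    intro t
    by_cases hta : t ≤ a
    · have hval : ∀ n : ℕ, gN n t = 0 := by
        intro n
        have h1 : min (((n:ℝ)+1) * (t - a)) (((n:ℝ)+1) * (b + 1/((n:ℝ)+1) - t)) ≤ 0 :=
          le_trans (min_le_left _ _)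
            (mul_nonpos_of_nonneg_of_nonpos (by positivity) (by linarith))
        have h2 : min 1 (min (((n:ℝ)+1) * (t - a)) (((n:ℝ)+1) * (b + 1/((n:ℝ)+1) - t))) ≤ 0 :=
          le_trans (min_le_right _ _) h1
        exact max_eq_left h2
      have hind : (Set.Ioc a b).indicator (fun _ => (1:ℝ)) t = 0 :=
        Set.indicator_of_notMem (fun hc => absurd hc.1 (not_lt.mpr hta)) _
      rw [hind]
      exact tendsto_atTop_of_eventually_const (i₀ := 0) (fun n _ => hval n)
    · push_neg at hta
      by_cases htb : t ≤ b
      · obtain ⟨N, hN⟩ := exists_nat_ge (1/(t-a))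
        have hval : ∀ n : ℕ, n ≥ N → gN n t = 1 := by
          intro n hn
          have hta' : 0 < t - a := by linarith
          have h1 : 1 ≤ ((n:ℝ)+1) * (t - a) := by
            have : (1/(t-a)) * (t-a) ≤ ((n:ℝ)+1) * (t-a) := by
              apply mul_le_mul_of_nonneg_right _ hta'.le
              have : (N:ℝ) ≤ (n:ℝ) := by exact_mod_cast hn
              linarith
            rwa [one_div_mul_cancel hta'.ne'] at this
          have h2 : 1 ≤ ((n:ℝ)+1) * (b + 1/((n:ℝ)+1) - t) := by
            have hn0 : (0:ℝ) < (n:ℝ)+1 := by positivity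
            have : ((n:ℝ)+1) * (b + 1/((n:ℝ)+1) - t) = ((n:ℝ)+1) * (b - t) + 1 := by
              field_simp
              ring
            rw [this]
            nlinarith
          have h3 : 1 ≤ min (((n:ℝ)+1) * (t - a)) (((n:ℝ)+1) * (b + 1/((n:ℝ)+1) - t)) :=
            le_min h1 h2
          have h4 : min 1 (min (((n:ℝ)+1) * (t - a)) (((n:ℝ)+1) * (b + 1/((n:ℝ)+1) - t))) = 1 :=
            min_eq_left h3
          rw [hgN_def]
          simp only [h4]
          exact max_eq_right zero_le_one
        have hind : (Set.Ioc a b).indicator (fun _ => (1:ℝ)) t = 1 :=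
          Set.indicator_of_mem (Set.mem_Ioc.mpr ⟨hta, htb⟩) _
        rw [hind]
        exact tendsto_atTop_of_eventually_const (i₀ := N) hval
      · push_neg at htb
        obtain ⟨N, hN⟩ := exists_nat_ge (1/(t-b))
        have hval : ∀ n : ℕ, n ≥ N → gN n t = 0 := by
          intro n hn
          have htb' : 0 < t - b := by linarith
          have hn0 : (0:ℝ) < (n:ℝ)+1 := by positivity
          have h1 : ((n:ℝ)+1) * (b + 1/((n:ℝ)+1) - t) ≤ 0 := by
            have he : ((n:ℝ)+1) * (b + 1/((n:ℝ)+1) - t) = 1 - ((n:ℝ)+1) * (t - b) := by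
              field_simp; ring
            rw [he]
            have : (1/(t-b)) * (t-b) ≤ ((n:ℝ)+1) * (t-b) := by
              apply mul_le_mul_of_nonneg_right _ htb'.le
              have : (N:ℝ) ≤ (n:ℝ) := by exact_mod_cast hn
              linarith
            rw [one_div_mul_cancel htb'.ne'] at this
            linarith
          have h2 : min 1 (min (((n:ℝ)+1) * (t - a)) (((n:ℝ)+1) * (b + 1/((n:ℝ)+1) - t))) ≤ 0 :=
            le_trans (min_le_right _ _) (le_trans (min_le_right _ _) h1)
          exact max_eq_left h2
        have hind : (Set.Ioc a b).indicator (fun _ => (1:ℝ)) t = 0 :=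
          Set.indicator_of_notMem (fun hc => absurd hc.2 (not_le.mpr htb)) _
        rw [hind]
        exact tendsto_atTop_of_eventually_const (i₀ := N) hval
  -- dominated convergence
  have htendI : Tendsto (fun n => ∫ t in Set.Ioc (0:ℝ) 1, (f t * t) * gN n t) atTop
      (𝓝 (∫ t in Set.Ioc (0:ℝ) 1, (f t * t) * (Set.Ioc a b).indicator (fun _ => (1:ℝ)) t)) := by
    apply tendsto_integral_of_dominated_convergence (bound := fun t => |f t * t|)
    · exact fun n => hFint.1.mul (hcont n).aestronglyMeasurable
    · exact hFint.abs
    · intro n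
      apply ae_of_all
      intro t
      rw [Real.norm_eq_abs, abs_mul]
      have h1 : |gN n t| ≤ 1 := by rw [abs_of_nonneg (hnonneg n t)]; exact hle1 n t
      calc |f t * t| * |gN n t| ≤ |f t * t| * 1 :=
            mul_le_mul_of_nonneg_left h1 (abs_nonneg _)
        _ = |f t * t| := mul_one _
    · exact ae_of_all _ fun t => (hpt t).const_mul (f t * t)
  have hterm : ∀ n, 0 ≤ ∫ t in Set.Ioc (0:ℝ) 1, (f t * t) * gN n t :=
    fun n => bern_pos hf hsupp hcm (gN n) (hcont n) (hnonneg n)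
  have hlim : 0 ≤ ∫ t in Set.Ioc (0:ℝ) 1,
      (f t * t) * (Set.Ioc a b).indicator (fun _ => (1:ℝ)) t :=
    ge_of_tendsto' htendI hterm
  -- convert
  have he1 : (∫ t in Set.Ioc (0:ℝ) 1, (f t * t) * (Set.Ioc a b).indicator (fun _ => (1:ℝ)) t)
      = ∫ t in Set.Ioc (0:ℝ) 1, (Set.Ioc a b).indicator (fun t => f t * t) t := by
    apply setIntegral_congr_fun measurableSet_Ioc
    intro t _
    by_cases h : t ∈ Set.Ioc a b <;> simp [h]
  rw [he1] at hlim
  have he2 : (∫ t in Set.Ioc (0:ℝ) 1, (Set.Ioc a b).indicator (fun t => f t * t) t)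
      = ∫ t in Set.Ioc a b, (Set.Ioc (0:ℝ) 1).indicator (fun t => f t * t) t := by
    rw [← integral_indicator measurableSet_Ioc, ← integral_indicator measurableSet_Ioc,
      Set.indicator_indicator, Set.indicator_indicator, Set.inter_comm]
  rwa [he2] at hlim


lemma backward (hf : IntegrableOn f (Set.Ioi 0))
    (hsupp : ∀ t : ℝ, t ∉ Set.Icc (0 : ℝ) 1 → f t = 0)
    (hcm : ∀ (n : ℕ), ∀ s : ℝ, 0 < s →
      0 ≤ (-1 : ℝ) ^ n *
        iteratedDeriv n (fun u => ∫ t in Set.Ioi (0:ℝ), f t * t ^ (u - 1)) s) :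
    ∀ᵐ t ∂(volume.restrict (Set.Ioi (0:ℝ))), 0 ≤ f t := by
  have hFint : IntegrableOn (fun t => f t * t) (Set.Ioc (0:ℝ) 1) := by
    have h1 : Integrable (fun t : ℝ => t * f t) (volume.restrict (Set.Ioc (0:ℝ) 1)) := by
      apply Integrable.bdd_mul (c := 1) (hf.mono_set Set.Ioc_subset_Ioi_self)
        continuous_id.aestronglyMeasurable
      filter_upwards [ae_restrict_mem measurableSet_Ioc] with t ht
      simp only [id_eq, Real.norm_eq_abs]
      rw [abs_of_pos ht.1]; exact ht.2
    exact h1.congr (ae_of_all _ fun t => mul_comm t (f t))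
  set Ftil : ℝ → ℝ := (Set.Ioc (0:ℝ) 1).indicator (fun t => f t * t) with hFtil_def
  have hFtil_int : Integrable Ftil volume :=
    (integrable_indicator_iff measurableSet_Ioc).mpr hFint
  have hLD := IsUnifLocDoublingMeasure.ae_tendsto_average (μ := (volume : Measure ℝ))
    hFtil_int.locallyIntegrable 1
  have hae : ∀ᵐ x ∂(volume : Measure ℝ), 0 ≤ Ftil x := by
    filter_upwards [hLD] with x hx
    have hmem : ∀ᶠ r in 𝓝[>] (0:ℝ), x ∈ Metric.closedBall x (1 * r) := by
      filter_upwards [self_mem_nhdsWithin] with r hr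
      exact Metric.mem_closedBall_self (by simp only [one_mul]; exact (le_of_lt hr))
    have htend : Tendsto (fun r => ⨍ y in Metric.closedBall x r, Ftil y) (𝓝[>] (0:ℝ))
        (𝓝 (Ftil x)) := hx (fun _ => x) id tendsto_id hmem
    apply ge_of_tendsto htend
    filter_upwards [self_mem_nhdsWithin] with r _
    rw [setAverage_eq]
    apply smul_nonneg (by positivity)
    rw [Real.closedBall_eq_Icc, integral_Icc_eq_integral_Ioc]
    exact interval_pos hf hsupp hcm (x - r) (x + r)
  have hae2 : ∀ᵐ t ∂(volume : Measure ℝ), t ∈ Set.Ioc (0:ℝ) 1 → 0 ≤ f t := by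
    filter_upwards [hae] with t ht hmem
    rw [hFtil_def, Set.indicator_of_mem hmem] at ht
    exact (mul_nonneg_iff_of_pos_right hmem.1).mp ht
  rw [ae_restrict_iff' measurableSet_Ioi]
  filter_upwards [hae2] with t h ht
  by_cases h1 : t ≤ 1
  · exact h ⟨ht, h1⟩
  · push_neg at h1
    have : f t = 0 := hsupp t (by rintro ⟨-, h2⟩; linarith)
    rw [this]


end Stmt9Aux

open MeasureTheory in
/-- For f ∈ L¹((0,∞)) vanishing outside [0,1], the Mellin transform of f is completely monotone
on (0,∞) iff f is nonnegative almost everywhere. -/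
theorem stmt9 (f : ℝ → ℝ)
    (hf : IntegrableOn f (Set.Ioi 0))
    (hsupp : ∀ t : ℝ, t ∉ Set.Icc (0 : ℝ) 1 → f t = 0) :
    (∀ (n : ℕ), ∀ s : ℝ, 0 < s →
        0 ≤ (-1 : ℝ) ^ n *
          iteratedDeriv n (fun u => ∫ t in Set.Ioi (0 : ℝ), f t * t ^ (u - 1)) s) ↔
    (∀ᵐ t ∂(volume.restrict (Set.Ioi (0 : ℝ))), 0 ≤ f t) := by
  constructor
  · exact Stmt9Aux.backward hf hsupp
  · intro hpos n s hs
    exact Stmt9Aux.forward hf hsupp hpos n s hs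
end

section
/- Let f be a real polynomial that is strictly positive on (0,∞). Then there exist real polynomials g and h, with all coefficients of g and h nonnegative and g not identically zero, such that f·g = h. -/
open Polynomial

lemma choose_rel (n j : ℕ) (hj : j ≤ n) :
    ((n.choose (j+1)) : ℝ) * (j+1) = (n.choose j : ℝ) * ((n:ℝ) - j) := by
  have := Nat.choose_succ_right_eq n j
  have h2 : ((n.choose (j+1) * (j+1) : ℕ) : ℝ) = ((n.choose j * (n - j) : ℕ) : ℝ) := by
    rw [this]
  push_cast [Nat.cast_sub hj] at h2
  linarith [h2]

-- coefficient formula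
lemma quad_coeff (b c : ℝ) (n k : ℕ) :
    ((X+1)^n * (X^2 + C b * X + C c)).coeff k =
      (if 2 ≤ k then (n.choose (k-2) : ℝ) else 0)
      + b * (if 1 ≤ k then (n.choose (k-1) : ℝ) else 0)
      + c * (n.choose k : ℝ) := by
  have h1 : (X+1:Polynomial ℝ)^n * (X^2 + C b * X + C c)
      = (X+1)^n * X^2 + C b * ((X+1)^n * X^1) + C c * (X+1)^n := by ring
  rw [h1]
  simp only [coeff_add, coeff_C_mul, coeff_mul_X_pow', coeff_X_add_one_pow]


lemma caseII (b c A B D x y : ℝ) (hc : 0 < c) (hε : 0 < c - b^2/4)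
    (hA0 : 0 ≤ A) (hB0 : 0 ≤ B) (hD0 : 0 ≤ D)
    (e1 : A*y = B*(x-1)) (e2 : B*(y-1) = D*x)
    (hx2 : 2 ≤ x) (hy2 : 2 ≤ y)
    (hII : b*y + (x-1) < 0)
    (hbn : (|b|+2)*(|b|+1+c) ≤ (x+y-2) * (c - b^2/4)) :
    0 ≤ A + b*B + c*D := by
  have habs := abs_nonneg b
  have hnegb := neg_abs_le b
  have hxb : x ≤ (|b|+1)*y := by nlinarith [hnegb, hy2, hII]
  have hny : x + y - 2 ≤ (|b|+2)*y := by linarith [hxb]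
  have hεy : (|b|+1+c) ≤ (c - b^2/4)*y := by
    have h5 := mul_le_mul_of_nonneg_right hny hε.le
    have h7 : (0:ℝ) < |b|+2 := by linarith
    nlinarith [h5, hbn, h7]
  have hE : 0 ≤ x*(x-1) + b*x*y + c*y*(y-1) := by
    have q1 : (c - b^2/4)*y^2 ≤ x^2 + b*x*y + c*y^2 := by
      nlinarith [sq_nonneg (x + b*y/2)]
    have q2 : (|b|+1+c)*y ≤ (c - b^2/4)*y*y := by
      nlinarith [mul_le_mul_of_nonneg_right hεy (by linarith : (0:ℝ) ≤ y)]
    nlinarith [q1, q2, hxb]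
  have key : (A + b*B + c*D) * (y*(y-1)) =
      D * (x*(x-1) + b*x*y + c*y*(y-1)) := by
    linear_combination (y-1)*e1 + ((x-1)+b*y)*e2
  have hyy : 0 < y*(y-1) := by nlinarith [hy2]
  nlinarith [mul_nonneg hD0 hE, key, hyy]

lemma poincare {b c : ℝ} (h : b^2 < 4*c) :
    ∃ n : ℕ, ∀ k, 0 ≤ ((X+1)^n * (X^2 + C b * X + C c)).coeff k := by
  have hc : 0 < c := by nlinarith [sq_nonneg b]
  have hε : 0 < c - b^2/4 := by nlinarith
  obtain ⟨n, hn⟩ := exists_nat_ge (|b| + |b|/c + (|b|+2)*(|b|+1+c)/(c - b^2/4))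
  have habs : (0:ℝ) ≤ |b| := abs_nonneg b
  have hnegb := neg_abs_le b
  have ht1 : (0:ℝ) ≤ |b|/c := div_nonneg habs hc.le
  have ht2 : (0:ℝ) ≤ (|b|+2)*(|b|+1+c)/(c - b^2/4) :=
    div_nonneg (mul_nonneg (by linarith) (by linarith)) hε.le
  have hb1 : |b| ≤ (n:ℝ) := by linarith
  have hb2 : |b|/c ≤ (n:ℝ) := by linarith
  have hb3 : (|b|+2)*(|b|+1+c) ≤ (n:ℝ) * (c - b^2/4) := by
    have hb3' : (|b|+2)*(|b|+1+c)/(c - b^2/4) ≤ (n:ℝ) := by linarith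
    rw [div_le_iff₀ hε] at hb3'
    linarith [hb3']
  refine ⟨n, fun k => ?_⟩
  rw [quad_coeff]
  match k with
  | 0 => simp; positivity
  | 1 =>
    simp only [Nat.choose_zero_right, Nat.choose_one_right]
    have h9 : |b| ≤ c * n := by
      rw [div_le_iff₀ hc] at hb2; linarith [hb2]
    simp only [if_pos (le_refl 1)]
    norm_num
    nlinarith [h9, hnegb]
  | (j+2) =>
    have h2 : 2 ≤ j + 2 := by omega
    have h1 : 1 ≤ j + 2 := by omega
    simp only [if_pos h2, if_pos h1, Nat.add_sub_cancel]
    have hred : j + 2 - 1 = j + 1 := by omega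
    rw [hred]
    have hA0 : (0:ℝ) ≤ (n.choose j : ℝ) := by positivity
    have hB0 : (0:ℝ) ≤ (n.choose (j+1) : ℝ) := by positivity
    have hD0 : (0:ℝ) ≤ (n.choose (j+2) : ℝ) := by positivity
    by_cases hj : j ≤ n
    case neg =>
      have hBz : (n.choose (j+1)) = 0 := Nat.choose_eq_zero_of_lt (by omega)
      have hDz : (n.choose (j+2)) = 0 := Nat.choose_eq_zero_of_lt (by omega)
      rw [hBz, hDz]; simpa using hA0
    case pos =>
      have e1 : (n.choose (j+1) : ℝ) * ((j:ℝ)+1) = (n.choose j : ℝ) * ((n:ℝ) - j) := by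
        have := choose_rel n j hj; push_cast at this ⊢; linarith [this]
      by_cases hI : 0 ≤ b * ((n:ℝ) - (j:ℝ)) + ((j:ℝ)+1)
      case pos =>
        have hjp : (0:ℝ) < (j:ℝ)+1 := by positivity
        have e1b : b*((n.choose (j+1) : ℝ)*((j:ℝ)+1))
            = b*((n.choose j : ℝ)*((n:ℝ)-j)) := by rw [e1]
        nlinarith [mul_nonneg hA0 hI, mul_nonneg (mul_nonneg hc.le hD0) hjp.le,
          e1b, hjp]
      case neg =>
        push_neg at hI
        have hj2 : j + 2 ≤ n := by
          by_contra hcon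
          have hnj : n = j ∨ n = j + 1 := by omega
          rcases hnj with rfl | rfl
          · simp at hI; linarith
          · push_cast at hI hb1
            nlinarith [hI, hb1, hnegb]
        have e2 : (n.choose (j+2) : ℝ) * ((j:ℝ)+2)
            = (n.choose (j+1) : ℝ) * ((n:ℝ) - (j:ℝ) - 1) := by
          have := choose_rel n (j+1) (by omega)
          push_cast at this ⊢; linarith [this]
        have hjn : ((j:ℝ)) + 2 ≤ (n:ℝ) := by exact_mod_cast hj2
        have hj0 : (0:ℝ) ≤ (j:ℝ) := Nat.cast_nonneg j
        refine caseII b c (n.choose j : ℝ) (n.choose (j+1) : ℝ) (n.choose (j+2) : ℝ)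
          ((j:ℝ)+2) ((n:ℝ)-(j:ℝ)) hc hε hA0 hB0 hD0 ?_ ?_ (by linarith) (by linarith)
          (by linarith [hI]) ?_
        · linear_combination -e1
        · linear_combination -e2
        · have hnn : ((j:ℝ)+2) + ((n:ℝ)-(j:ℝ)) - 2 = (n:ℝ) := by ring
          rw [hnn]; exact hb3


lemma mul_coeff_nonneg {p q : Polynomial ℝ} (hp : ∀ k, 0 ≤ p.coeff k)
    (hq : ∀ k, 0 ≤ q.coeff k) : ∀ k, 0 ≤ (p * q).coeff k := by
  intro k
  rw [Polynomial.coeff_mul]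
  exact Finset.sum_nonneg fun x _ => mul_nonneg (hp _) (hq _)

lemma lin_coeff_nonneg {s : ℝ} (hs : 0 ≤ s) : ∀ k, 0 ≤ (X + C s).coeff k := by
  intro k
  rcases k with _ | _ | k <;> simp [coeff_X, coeff_C, hs]


lemma main_aux : ∀ N : ℕ, ∀ f : Polynomial ℝ, f.natDegree ≤ N →
    (∀ x : ℝ, 0 < x → 0 < f.eval x) →
    ∃ g h : Polynomial ℝ, g ≠ 0 ∧ (∀ k, 0 ≤ g.coeff k) ∧ (∀ k, 0 ≤ h.coeff k) ∧
      f * g = h := by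
  intro N
  induction N using Nat.strong_induction_on with
  | _ N IH =>
  intro f hdeg hf
  have hf0 : f ≠ 0 := fun h => by simpa [h] using hf 1 one_pos
  by_cases hroot : ∃ r : ℝ, f.IsRoot r
  · -- real root case
    obtain ⟨r, hr⟩ := hroot
    have hr0 : r ≤ 0 := by
      by_contra hrp
      push_neg at hrp
      have := hf r hrp
      rw [Polynomial.IsRoot] at hr
      linarith
    obtain ⟨q, hq⟩ := Polynomial.dvd_iff_isRoot.mpr hr
    have hq0 : q ≠ 0 := by
      intro h; rw [h, mul_zero] at hq; exact hf0 hq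
    have hdf : f.natDegree = 1 + q.natDegree := by
      rw [hq, Polynomial.natDegree_mul (Polynomial.X_sub_C_ne_zero r) hq0,
        Polynomial.natDegree_X_sub_C]
    have hN1 : 1 ≤ N := by omega
    have hqpos : ∀ x : ℝ, 0 < x → 0 < q.eval x := by
      intro x hx
      have h1 := hf x hx
      rw [hq, Polynomial.eval_mul] at h1
      have hxr : 0 < x - r := by linarith
      simp only [Polynomial.eval_sub, Polynomial.eval_X, Polynomial.eval_C] at h1
      nlinarith [h1, hxr]
    obtain ⟨g, h, hgne, hgc, hhc, hprod⟩ :=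
      IH (N-1) (by omega) q (by omega) hqpos
    refine ⟨g, (X + C (-r)) * h, hgne, hgc, ?_, ?_⟩
    · exact mul_coeff_nonneg (lin_coeff_nonneg (by linarith)) hhc
    · have hXC : (X : Polynomial ℝ) - C r = X + C (-r) := by
        rw [map_neg, sub_eq_add_neg]
      rw [hq, hXC, mul_assoc, hprod]
  · -- no real root
    by_cases hdeg0 : f.natDegree = 0
    · -- constant
      have hfc := Polynomial.eq_C_of_natDegree_eq_zero hdeg0
      have ha : 0 < f.coeff 0 := by
        have := hf 1 one_pos
        rw [hfc] at this
        simpa using this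
      refine ⟨1, f, one_ne_zero, ?_, ?_, mul_one f⟩
      · intro k; rcases k with _ | k <;> simp [Polynomial.coeff_one]
      · intro k
        rw [hfc]
        rcases k with _ | k <;> simp [ha.le]
    · -- complex root: irreducible quadratic factor
      have hd1 : 1 ≤ f.natDegree := Nat.one_le_iff_ne_zero.mpr hdeg0
      set F := f.map (algebraMap ℝ ℂ) with hF
      have hFdeg : F.degree ≠ 0 := by
        rw [hF, Polynomial.degree_map_eq_of_injective (algebraMap ℝ ℂ).injective]
        have : 0 < f.degree := Polynomial.natDegree_pos_iff_degree_pos.mp (by omega)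
        exact ne_of_gt this
      obtain ⟨z, hz⟩ := IsAlgClosed.exists_root F hFdeg
      have hzeval : F.eval z = 0 := hz
      have him : z.im ≠ 0 := by
        intro h0
        apply hroot
        refine ⟨z.re, ?_⟩
        have hzre : z = (algebraMap ℝ ℂ) z.re := by
          apply Complex.ext <;> simp [h0]
        rw [hzre] at hzeval
        rw [hF, Polynomial.eval_map, Polynomial.eval₂_at_apply] at hzeval
        exact (algebraMap ℝ ℂ).injective (by simpa using hzeval)
      -- conjugate is also a root
      have hconjmap : F.map (starRingEnd ℂ) = F := by
        rw [hF, Polynomial.map_map]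
        congr 1
        ext r
        simp [Complex.conj_ofReal]
      have hzbar : F.eval ((starRingEnd ℂ) z) = 0 := by
        conv_lhs => rw [← hconjmap]
        rw [Polynomial.eval_map, Polynomial.eval₂_at_apply, hzeval, map_zero]
      have hne : (starRingEnd ℂ) z ≠ z := fun h => him (Complex.conj_eq_iff_im.mp h)
      -- (X - C z)(X - C z̄) ∣ F
      obtain ⟨q₁, hq₁⟩ := Polynomial.dvd_iff_isRoot.mpr (hzeval : F.IsRoot z)
      have hq₁root : q₁.IsRoot ((starRingEnd ℂ) z) := by
        have := hzbar
        rw [hq₁] at this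
        simp only [Polynomial.eval_mul, Polynomial.eval_sub, Polynomial.eval_X,
          Polynomial.eval_C] at this
        rcases mul_eq_zero.mp this with h | h
        · exact absurd (by linear_combination h) hne
        · exact h
      obtain ⟨q₂, hq₂⟩ := Polynomial.dvd_iff_isRoot.mpr hq₁root
      set b : ℝ := -(2 * z.re) with hb
      set c : ℝ := Complex.normSq z with hcdef
      set p : Polynomial ℝ := X^2 + C b * X + C c with hp
      have hbc : b^2 < 4*c := by
        have : c = z.re^2 + z.im^2 := by
          rw [hcdef, Complex.normSq_apply]; ring
        rw [hb, this]
        have : 0 < z.im^2 := by positivity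
        nlinarith
      have hmapp : p.map (algebraMap ℝ ℂ) =
          (X - C z) * (X - C ((starRingEnd ℂ) z)) := by
        rw [hp]
        simp only [Polynomial.map_add, Polynomial.map_pow, Polynomial.map_X,
          Polynomial.map_mul, Polynomial.map_C]
        have h1 : (algebraMap ℝ ℂ) b = -(z + (starRingEnd ℂ) z) := by
          rw [hb]
          push_cast [Complex.coe_algebraMap, Complex.add_conj]
          ring
        have h2 : (algebraMap ℝ ℂ) c = z * (starRingEnd ℂ) z := by
          rw [hcdef, Complex.mul_conj]
          rfl
        rw [h1, h2, map_neg, map_add, map_mul]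
        ring
      clear_value b c p
      have hpdvd : p ∣ f := by
        rw [← Polynomial.map_dvd_map' (algebraMap ℝ ℂ), hmapp]
        rw [← hF, hq₁, hq₂]
        exact Dvd.intro q₂ (by ring)
      obtain ⟨q, hq⟩ := hpdvd
      have hpq_eval : ∀ x : ℝ, 0 < p.eval x := by
        intro x
        rw [hp]
        simp only [Polynomial.eval_add, Polynomial.eval_pow, Polynomial.eval_mul,
          Polynomial.eval_X, Polynomial.eval_C]
        have hkey : x^2 + b*x + c = (x + b/2)^2 + (c - b^2/4) := by ring
        rw [hkey]
        have h8 := sq_nonneg (x + b/2)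
        linarith [hbc]
      have hq0 : q ≠ 0 := by
        intro h; rw [h, mul_zero] at hq; exact hf0 hq
      have hp0 : p ≠ 0 := by
        intro h
        have := hpq_eval 0
        rw [h] at this
        simp at this
      have hpdeg : p.natDegree = 2 := by
        have : p = C 1 * X^2 + C b * X + C c := by rw [hp]; simp
        rw [this]
        exact Polynomial.natDegree_quadratic one_ne_zero
      have hdf : f.natDegree = 2 + q.natDegree := by
        rw [hq, Polynomial.natDegree_mul hp0 hq0, hpdeg]
      have hqpos : ∀ x : ℝ, 0 < x → 0 < q.eval x := by
        intro x hx
        have h1 := hf x hx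
        rw [hq, Polynomial.eval_mul] at h1
        nlinarith [h1, hpq_eval x]
      obtain ⟨g, h, hgne, hgc, hhc, hprod⟩ :=
        IH (N-1) (by omega) q (by omega) hqpos
      obtain ⟨n, hn⟩ := poincare hbc
      have hX1 : (X + 1 : Polynomial ℝ) ≠ 0 := by
        intro hcon
        have := congrArg (fun s => Polynomial.coeff s 1) hcon
        simp [Polynomial.coeff_one] at this
      refine ⟨(X+1)^n * g, ((X+1)^n * p) * h,
        mul_ne_zero (pow_ne_zero n hX1) hgne, ?_, ?_, ?_⟩
      · apply mul_coeff_nonneg _ hgc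
        intro k
        rw [Polynomial.coeff_X_add_one_pow]
        positivity
      · exact mul_coeff_nonneg (hp ▸ hn) hhc
      · rw [hq, ← hprod]; ring

/-- Pólya's lemma: a real polynomial strictly positive on (0,∞) becomes a polynomial with
nonnegative coefficients after multiplication by a suitable nonzero polynomial with
nonnegative coefficients. -/
theorem stmt12 (f : Polynomial ℝ) (hf : ∀ x : ℝ, 0 < x → 0 < f.eval x) :
    ∃ g h : Polynomial ℝ, g ≠ 0 ∧ (∀ k, 0 ≤ g.coeff k) ∧ (∀ k, 0 ≤ h.coeff k) ∧
      f * g = h := by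
  exact main_aux f.natDegree f le_rfl hf
end
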